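/- arXiv:1901.01861 — 3 statements merged into one kernel-verified Lean document; each statement's English description precedes it below -/
import Mathlib

section
/- Every simple graph G with maximum degree Δ has a proper edge colouring using at most Δ+1 colours (Vizing's theorem). -/
open SimpleGraph

/-- `c` is a proper `k`-edge colouring of `G`: edges sharing an end-vertex get distinct colours. -/
def ProperEdgeColoring {V : Type*} (G : SimpleGraph V) (k : ℕ) (c : G.edgeSet → Fin k) : Prop :=
  ∀ e f : G.edgeSet, e ≠ f → (∃ v : V, v ∈ (e : Sym2 V) ∧ v ∈ (f : Sym2 V)) → c e ≠ c f

/-- `G` admits a proper `k`-edge colouring. -/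
def EdgeColorable {V : Type*} (G : SimpleGraph V) (k : ℕ) : Prop :=
  ∃ c : G.edgeSet → Fin k, ProperEdgeColoring G k c

namespace Vizing
set_option linter.unusedSectionVars false

variable {V : Type*} [Fintype V] [DecidableEq V] {G : SimpleGraph V} [DecidableRel G.Adj]

/-- A proper partial edge colouring of `G` with `n` colours. -/
structure PC (G : SimpleGraph V) (n : ℕ) where
  f : Sym2 V → Option (Fin n)
  supp : ∀ e, f e ≠ none → e ∈ G.edgeSet
  proper : ∀ ⦃x u v : V⦄, G.Adj x u → G.Adj x v → u ≠ v →
      f s(x, u) = f s(x, v) → f s(x, u) = none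

namespace PC

variable {n : ℕ}

/-- colour `c` does not appear on any edge at `v`. -/
def free (C : PC G n) (v : V) (c : Fin n) : Prop :=
  ∀ w, G.Adj v w → C.f s(v, w) ≠ some c

lemma proper' (C : PC G n) {x u v : V} (hu : G.Adj x u) (hv : G.Adj x v) (huv : u ≠ v)
    {c : Fin n} (h1 : C.f s(x, u) = some c) (h2 : C.f s(x, v) = some c) : False := by
  have := C.proper hu hv huv (h1.trans h2.symm)
  rw [h1] at this; exact Option.some_ne_none _ this

lemma key_ne {x u v : V} (hu : G.Adj x u) (huv : u ≠ v) : s(x, u) ≠ s(x, v) := by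
  intro h
  rcases Sym2.eq_iff.1 h with ⟨-, h2⟩ | ⟨-, h2⟩
  · exact huv h2
  · exact G.ne_of_adj hu h2.symm

/-- every vertex has a free colour when `n = Δ + 1`. -/
lemma exists_free (C : PC G (G.maxDegree + 1)) (v : V) :
    ∃ c, C.free v c := by
  classical
  by_contra h
  push_neg at h
  -- every colour appears at v; injection from colours to neighbours
  have hex : ∀ c, ∃ w, G.Adj v w ∧ C.f s(v, w) = some c := by
    intro c
    have hc := h c
    simp only [free, not_forall, Classical.not_imp, not_ne_iff] at hc
    obtain ⟨x, hx1, hx2⟩ := hc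
    exact ⟨x, hx1, hx2⟩
  choose w hw hcw using hex
  have hinj : Function.Injective w := by
    intro c₁ c₂ hcc
    have : (some c₁ : Option (Fin (G.maxDegree + 1))) = some c₂ :=
      (hcw c₁).symm.trans (by rw [hcc]; exact hcw c₂)
    exact Option.some.inj this
  have h1 : Fintype.card (Fin (G.maxDegree + 1)) ≤ G.degree v := by
    have := Fintype.card_le_of_injective (fun c => (⟨w c, by
      rw [SimpleGraph.mem_neighborFinset]; exact hw c⟩ : G.neighborFinset v))
      (fun c₁ c₂ hcc => hinj (congrArg Subtype.val hcc))
    rw [Fintype.card_coe] at this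
    exact this
  rw [Fintype.card_fin] at h1
  exact absurd (G.degree_le_maxDegree v) (by omega)

/-- erase the colour of an edge. -/
def erase (C : PC G n) (e₀ : Sym2 V) : PC G n where
  f := Function.update C.f e₀ none
  supp := by
    intro e he
    rcases eq_or_ne e e₀ with rfl | hne
    · simp [Function.update_self] at he
    · rw [Function.update_of_ne hne] at he; exact C.supp e he
  proper := by
    intro x u v hu hv huv heq
    rcases eq_or_ne s(x, u) e₀ with h1 | h1
    · rw [h1, Function.update_self]
    · rw [Function.update_of_ne h1] at heq ⊢
      rcases eq_or_ne s(x, v) e₀ with h2 | h2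
      · rw [h2, Function.update_self] at heq; exact heq
      · rw [Function.update_of_ne h2] at heq
        exact C.proper hu hv huv heq

lemma erase_apply (C : PC G n) (e₀ e : Sym2 V) (h : e ≠ e₀) :
    (C.erase e₀).f e = C.f e := Function.update_of_ne h _ _

lemma erase_free (C : PC G n) (e₀ : Sym2 V) {v c} (h : C.free v c) :
    (C.erase e₀).free v c := by
  intro w hw
  rcases eq_or_ne s(v, w) e₀ with h1 | h1
  · rw [h1]; show Function.update C.f e₀ none e₀ ≠ _
    rw [Function.update_self]; simp
  · rw [erase_apply _ _ _ h1]; exact h w hw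

/-- colour an uncoloured edge with a colour free at both ends. -/
def paint (C : PC G n) (x y : V) (c : Fin n) (hxy : G.Adj x y)
    (hfx : C.free x c) (hfy : C.free y c) : PC G n where
  f := Function.update C.f s(x, y) (some c)
  supp := by
    intro e he
    rcases eq_or_ne e s(x, y) with rfl | hne
    · exact hxy
    · rw [Function.update_of_ne hne] at he; exact C.supp e he
  proper := by
    intro a u v hu hv huv heq
    rcases eq_or_ne s(a, u) s(x, y) with h1 | h1
    · exfalso
      rw [h1, Function.update_self] at heq
      have h2 : s(a, v) ≠ s(x, y) := by
        intro h2; exact huv (by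
          have := h1.trans h2.symm
          rcases Sym2.eq_iff.1 this with ⟨-, h3⟩ | ⟨h3, h4⟩
          · exact h3
          · -- a = v and u = a: impossible since  a ≠ u? a adj u
            exact absurd (h3 ▸ h4) (G.ne_of_adj hu).symm)
      rw [Function.update_of_ne h2] at heq
      -- s(a,u) = s(x,y): either a = x, u = y or a = y, u = x
      rcases Sym2.eq_iff.1 h1 with ⟨ha, hu'⟩ | ⟨ha, hu'⟩
      · subst ha; exact hfx v hv heq.symm
      · subst ha; exact hfy v hv heq.symm
    · rw [Function.update_of_ne h1] at heq
      rcases eq_or_ne s(a, v) s(x, y) with h2 | h2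
      · exfalso
        rw [h2, Function.update_self] at heq
        rcases Sym2.eq_iff.1 h2 with ⟨ha, hv'⟩ | ⟨ha, hv'⟩
        · subst ha; exact hfx u hu heq
        · subst ha; exact hfy u hu heq
      · rw [Function.update_of_ne h2] at heq
        rw [Function.update_of_ne h1]
        exact C.proper hu hv huv heq

lemma paint_apply_ne (C : PC G n) {x y c hxy hfx hfy} (e : Sym2 V) (h : e ≠ s(x, y)) :
    (C.paint x y c hxy hfx hfy).f e = C.f e := Function.update_of_ne h _ _

lemma paint_apply (C : PC G n) {x y c hxy hfx hfy} :
    (C.paint x y c hxy hfx hfy).f s(x, y) = some c := Function.update_self _ _ _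

lemma free_all (C : PC G n) {v : V} {c : Fin n} (h : C.free v c) :
    ∀ w : V, C.f s(v, w) ≠ some c := by
  intro w hc
  have hadj : G.Adj v w := by
    have := C.supp s(v, w) (by rw [hc]; simp)
    rwa [SimpleGraph.mem_edgeSet] at this
  exact h w hadj hc

/-- swap colours `c` and `d`. -/
def swapcd (c d : Fin n) : Option (Fin n) → Option (Fin n)
  | none => none
  | some col => if col = c then some d else if col = d then some c else some col

lemma swapcd_none (c d : Fin n) : swapcd c d none = none := rfl

lemma swapcd_eq_none {c d : Fin n} {o : Option (Fin n)} (h : swapcd c d o = none) :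
    o = none := by
  match o with
  | none => rfl
  | some col =>
    simp only [swapcd] at h
    split at h <;> simp_all <;> split at h <;> simp_all

lemma swapcd_d {c d : Fin n} : swapcd c d (some d) = some c := by
  simp only [swapcd]
  split
  · simp_all
  · simp

lemma swapcd_c {c d : Fin n} : swapcd c d (some c) = some d := by
  simp [swapcd]

lemma swapcd_other {c d col : Fin n} (h1 : col ≠ c) (h2 : col ≠ d) :
    swapcd c d (some col) = some col := by
  simp [swapcd, h1, h2]

lemma swapcd_eq_some_c {c d : Fin n} (hcd : c ≠ d) {o : Option (Fin n)}
    (h : swapcd c d o = some c) : o = some d := by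
  match o with
  | none => simp [swapcd] at h
  | some col =>
    by_cases h1 : col = c
    · subst h1; rw [swapcd_c] at h; exact absurd (Option.some.inj h).symm hcd
    · by_cases h2 : col = d
      · subst h2; rfl
      · rw [swapcd_other h1 h2] at h
        exact absurd (Option.some.inj h) h1

lemma swapcd_eq_some_d {c d : Fin n} (hcd : c ≠ d) {o : Option (Fin n)}
    (h : swapcd c d o = some d) : o = some c := by
  match o with
  | none => simp [swapcd] at h
  | some col =>
    by_cases h1 : col = c
    · subst h1; rfl
    · by_cases h2 : col = d
      · subst h2; rw [swapcd_d] at h; exact absurd (Option.some.inj h) hcd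
      · rw [swapcd_other h1 h2] at h
        exact absurd (Option.some.inj h) h2

lemma swapcd_eq_some_other {c d col : Fin n} (h1 : col ≠ c) (h2 : col ≠ d)
    {o : Option (Fin n)} (h : swapcd c d o = some col) : o = some col := by
  match o with
  | none => simp [swapcd] at h
  | some col' =>
    by_cases g1 : col' = c
    · subst g1; rw [swapcd_c] at h; exact absurd (Option.some.inj h).symm h2
    · by_cases g2 : col' = d
      · subst g2; rw [swapcd_d] at h; exact absurd (Option.some.inj h).symm h1
      · rwa [swapcd_other g1 g2] at h

lemma swapcd_invol (c d : Fin n) (o : Option (Fin n)) :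
    swapcd c d (swapcd c d o) = o := by
  match o with
  | none => rfl
  | some col =>
    by_cases h1 : col = c
    · rw [h1, swapcd_c, swapcd_d]
    · by_cases h2 : col = d
      · rw [h2, swapcd_d, swapcd_c]
      · rw [swapcd_other h1 h2, swapcd_other h1 h2]

lemma swapcd_inj {c d : Fin n} {o₁ o₂ : Option (Fin n)}
    (h : swapcd c d o₁ = swapcd c d o₂) : o₁ = o₂ := by
  have := congrArg (swapcd c d) h
  rwa [swapcd_invol, swapcd_invol] at this

/-- the graph of edges coloured `c` or `d`. -/
def cdGraph (C : PC G n) (c d : Fin n) : SimpleGraph V where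
  Adj v w := C.f s(v, w) = some c ∨ C.f s(v, w) = some d
  symm := by constructor; intro v w h; rwa [Sym2.eq_swap] at h
  loopless := by
    constructor; intro v h
    have hne : C.f s(v, v) ≠ none := by rcases h with h | h <;> rw [h] <;> simp
    have := C.supp s(v, v) hne
    rw [SimpleGraph.mem_edgeSet] at this
    exact G.loopless.irrefl v this

lemma cdGraph_adj_of_some_c {C : PC G n} {c d : Fin n} {v w : V}
    (h : C.f s(v, w) = some c) : (cdGraph C c d).Adj v w := Or.inl h

lemma cdGraph_adj_of_some_d {C : PC G n} {c d : Fin n} {v w : V}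
    (h : C.f s(v, w) = some d) : (cdGraph C c d).Adj v w := Or.inr h

lemma swapcd_self (c : Fin n) (o : Option (Fin n)) : swapcd c c o = o := by
  match o with
  | none => rfl
  | some col =>
    by_cases h : col = c
    · subst h; rw [swapcd_c]
    · rw [swapcd_other h h]

lemma cdGraph_bridge {C : PC G n} {c d : Fin n} {x₀ a b : V}
    (hcd : C.f s(a, b) = some c ∨ C.f s(a, b) = some d)
    (ht : ∃ p ∈ s(a, b), (cdGraph C c d).Reachable x₀ p) :
    (cdGraph C c d).Reachable x₀ a ∧ (cdGraph C c d).Reachable x₀ b := by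
  have hadj : (cdGraph C c d).Adj a b := hcd
  obtain ⟨p, hp, hr⟩ := ht
  rcases Sym2.mem_iff.1 hp with rfl | rfl
  · exact ⟨hr, hr.trans hadj.reachable⟩
  · exact ⟨hr.trans hadj.symm.reachable, hr⟩

open Classical in
/-- the function obtained by swapping `c`/`d` on the Kempe chain through `x₀`. -/
noncomputable def invf (C : PC G n) (c d : Fin n) (x₀ : V) : Sym2 V → Option (Fin n) :=
  fun e => if ∃ v ∈ e, (cdGraph C c d).Reachable x₀ v then swapcd c d (C.f e) else C.f e

lemma invf_touch {C : PC G n} {c d : Fin n} {x₀ : V} {e : Sym2 V}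
    (h : ∃ v ∈ e, (cdGraph C c d).Reachable x₀ v) :
    invf C c d x₀ e = swapcd c d (C.f e) := by
  rw [invf]; exact if_pos h

lemma invf_untouch {C : PC G n} {c d : Fin n} {x₀ : V} {e : Sym2 V}
    (h : ¬ ∃ v ∈ e, (cdGraph C c d).Reachable x₀ v) :
    invf C c d x₀ e = C.f e := by
  rw [invf]; exact if_neg h

lemma invf_self {C : PC G n} {c : Fin n} {x₀ : V} (e : Sym2 V) :
    invf C c c x₀ e = C.f e := by
  by_cases h : ∃ v ∈ e, (cdGraph C c c).Reachable x₀ v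
  · rw [invf_touch h, swapcd_self]
  · exact invf_untouch h

/-- invert the `c`/`d` Kempe chain through `x₀`. -/
noncomputable def invert (C : PC G n) (c d : Fin n) (x₀ : V) : PC G n where
  f := invf C c d x₀
  supp := by
    intro e he
    apply C.supp
    intro hn
    by_cases h : ∃ v ∈ e, (cdGraph C c d).Reachable x₀ v
    · rw [invf_touch h, hn, swapcd_none] at he; exact he rfl
    · rw [invf_untouch h, hn] at he; exact he rfl
  proper := by
    intro x u v hu hv huv heq
    by_cases hcd : c = d
    · subst hcd
      rw [invf_self, invf_self] at heq
      rw [invf_self]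
      exact C.proper hu hv huv heq
    by_contra hne
    obtain ⟨col, hcol⟩ : ∃ col, invf C c d x₀ s(x, u) = some col := by
      match h : invf C c d x₀ s(x, u) with
      | none => exact absurd h hne
      | some col => exact ⟨col, rfl⟩
    have hcol2 : invf C c d x₀ s(x, v) = some col := heq ▸ hcol
    have hxu : (x : V) ∈ s(x, u) := Sym2.mem_mk_left x u
    have hxv : (x : V) ∈ s(x, v) := Sym2.mem_mk_left x v
    by_cases t1 : ∃ p ∈ s(x, u), (cdGraph C c d).Reachable x₀ p
    · by_cases t2 : ∃ p ∈ s(x, v), (cdGraph C c d).Reachable x₀ p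
      · rw [invf_touch t1] at hcol
        rw [invf_touch t2] at hcol2
        have := swapcd_inj (hcol.trans hcol2.symm)
        have hnone := C.proper hu hv huv this
        rw [hnone, swapcd_none] at hcol
        exact Option.some_ne_none _ hcol.symm
      · rw [invf_touch t1] at hcol
        by_cases g1 : col = c
        · subst g1
          have := swapcd_eq_some_c hcd hcol
          have := cdGraph_bridge (Or.inr this) t1
          exact t2 ⟨x, hxv, this.1⟩
        · by_cases g2 : col = d
          · subst g2
            have := swapcd_eq_some_d hcd hcol
            have := cdGraph_bridge (Or.inl this) t1
            exact t2 ⟨x, hxv, this.1⟩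
          · have h1 := swapcd_eq_some_other g1 g2 hcol
            rw [invf_untouch t2] at hcol2
            have := C.proper hu hv huv (h1.trans hcol2.symm)
            rw [h1] at this
            exact Option.some_ne_none _ this
    · by_cases t2 : ∃ p ∈ s(x, v), (cdGraph C c d).Reachable x₀ p
      · rw [invf_untouch t1] at hcol
        rw [invf_touch t2] at hcol2
        by_cases g1 : col = c
        · subst g1
          have := swapcd_eq_some_c hcd hcol2
          have := cdGraph_bridge (Or.inr this) t2
          exact t1 ⟨x, hxu, this.1⟩
        · by_cases g2 : col = d
          · subst g2
            have := swapcd_eq_some_d hcd hcol2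
            have := cdGraph_bridge (Or.inl this) t2
            exact t1 ⟨x, hxu, this.1⟩
          · have h2 := swapcd_eq_some_other g1 g2 hcol2
            have := C.proper hu hv huv (hcol.trans h2.symm)
            rw [hcol] at this
            exact Option.some_ne_none _ this
      · rw [invf_untouch t1] at hcol
        rw [invf_untouch t2] at hcol2
        have := C.proper hu hv huv (hcol.trans hcol2.symm)
        rw [hcol] at this
        exact Option.some_ne_none _ this

lemma invert_none_iff (C : PC G n) (c d : Fin n) (x₀ : V) (e : Sym2 V) :
    (invert C c d x₀).f e = none ↔ C.f e = none := by
  show invf C c d x₀ e = none ↔ _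
  by_cases h : ∃ v ∈ e, (cdGraph C c d).Reachable x₀ v
  · rw [invf_touch h]
    constructor
    · exact swapcd_eq_none
    · intro h'; rw [h', swapcd_none]
  · rw [invf_untouch h]

lemma invert_not_reach (C : PC G n) (c d : Fin n) (x₀ : V) {v : V}
    (hv : ¬ (cdGraph C c d).Reachable x₀ v) {e : Sym2 V} (he : v ∈ e) :
    (invert C c d x₀).f e = C.f e := by
  show invf C c d x₀ e = C.f e
  by_cases h : ∃ p ∈ e, (cdGraph C c d).Reachable x₀ p
  · rw [invf_touch h]
    obtain ⟨w, rfl⟩ := Sym2.mem_iff_exists.1 he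
    match hfe : C.f s(v, w) with
    | none => rw [swapcd_none]
    | some col =>
      by_cases g1 : col = c
      · subst g1; exact absurd (cdGraph_bridge (Or.inl hfe) h).1 hv
      · by_cases g2 : col = d
        · subst g2; exact absurd (cdGraph_bridge (Or.inr hfe) h).1 hv
        · rw [swapcd_other g1 g2]
  · exact invf_untouch h

lemma invert_free_cd {C : PC G n} {c d : Fin n} {x₀ v : V} (hcd : c ≠ d)
    (hv : (cdGraph C c d).Reachable x₀ v) (h : C.free v d) :
    (invert C c d x₀).free v c := by
  intro w hw hcontra
  have ht : ∃ p ∈ s(v, w), (cdGraph C c d).Reachable x₀ p := ⟨v, Sym2.mem_mk_left v w, hv⟩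
  have : invf C c d x₀ s(v, w) = some c := hcontra
  rw [invf_touch ht] at this
  exact h w hw (swapcd_eq_some_c hcd this)

lemma invert_free_dc {C : PC G n} {c d : Fin n} {x₀ v : V} (hcd : c ≠ d)
    (hv : (cdGraph C c d).Reachable x₀ v) (h : C.free v c) :
    (invert C c d x₀).free v d := by
  intro w hw hcontra
  have ht : ∃ p ∈ s(v, w), (cdGraph C c d).Reachable x₀ p := ⟨v, Sym2.mem_mk_left v w, hv⟩
  have : invf C c d x₀ s(v, w) = some d := hcontra
  rw [invf_touch ht] at this
  exact h w hw (swapcd_eq_some_d hcd this)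

lemma invert_free_other {C : PC G n} {c d col : Fin n} {x₀ v : V}
    (h1 : col ≠ c) (h2 : col ≠ d) (h : C.free v col) :
    (invert C c d x₀).free v col := by
  intro w hw hcontra
  have : invf C c d x₀ s(v, w) = some col := hcontra
  by_cases ht : ∃ p ∈ s(v, w), (cdGraph C c d).Reachable x₀ p
  · rw [invf_touch ht] at this
    exact h w hw (swapcd_eq_some_other h1 h2 this)
  · rw [invf_untouch ht] at this
    exact h w hw this

lemma invert_apply_other {C : PC G n} {c d col : Fin n} {x₀ : V}
    (h1 : col ≠ c) (h2 : col ≠ d) {e : Sym2 V} (h : C.f e = some col) :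
    (invert C c d x₀).f e = some col := by
  show invf C c d x₀ e = some col
  by_cases ht : ∃ p ∈ e, (cdGraph C c d).Reachable x₀ p
  · rw [invf_touch ht, h, swapcd_other h1 h2]
  · rw [invf_untouch ht, h]

lemma invert_apply_touch_d {C : PC G n} {c d : Fin n} {x₀ v : V}
    (hv : (cdGraph C c d).Reachable x₀ v) {e : Sym2 V} (hve : v ∈ e)
    (h : C.f e = some d) : (invert C c d x₀).f e = some c := by
  show invf C c d x₀ e = some c
  rw [invf_touch ⟨v, hve, hv⟩, h, swapcd_d]

end PC

section PathLemma

variable {H : SimpleGraph V}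

lemma interior_two : ∀ {a b : V} (p : H.Walk a b), p.IsPath → ∀ {v : V}, v ∈ p.support →
    v ≠ a → v ≠ b → ∃ u₁ u₂, u₁ ≠ u₂ ∧ H.Adj v u₁ ∧ H.Adj v u₂ ∧
      u₁ ∈ p.support ∧ u₂ ∈ p.support := by
  intro a b p
  induction p with
  | nil =>
    intro _ v hv hva _
    rw [SimpleGraph.Walk.support_nil, List.mem_singleton] at hv
    exact absurd hv hva
  | @cons a c b h q ih =>
    intro hp v hv hva hvb
    have hq := (SimpleGraph.Walk.cons_isPath_iff h q).1 hp
    rw [SimpleGraph.Walk.support_cons, List.mem_cons] at hv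
    rcases hv with rfl | hv
    · exact absurd rfl hva
    by_cases hvc : v = c
    · subst hvc
      cases q with
      | nil => exact absurd rfl hvb
      | @cons c e b h2 q2 =>
        refine ⟨a, e, ?_, h.symm, h2, ?_, ?_⟩
        · intro hae
          apply hq.2
          rw [hae, SimpleGraph.Walk.support_cons, List.mem_cons]
          exact Or.inr q2.start_mem_support
        · rw [SimpleGraph.Walk.support_cons, List.mem_cons]; exact Or.inl rfl
        · rw [SimpleGraph.Walk.support_cons, List.mem_cons]
          right
          rw [SimpleGraph.Walk.support_cons, List.mem_cons]
          exact Or.inr q2.start_mem_support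
    · obtain ⟨u₁, u₂, h12, ha1, ha2, hs1, hs2⟩ := ih hq.1 hv hvc hvb
      exact ⟨u₁, u₂, h12, ha1, ha2,
        by rw [SimpleGraph.Walk.support_cons, List.mem_cons]; exact Or.inr hs1,
        by rw [SimpleGraph.Walk.support_cons, List.mem_cons]; exact Or.inr hs2⟩

lemma head_nbr {a b : V} (p : H.Walk a b) (hab : a ≠ b) :
    ∃ u, H.Adj a u ∧ u ∈ p.support := by
  cases p with
  | nil => exact absurd rfl hab
  | @cons a c b h q =>
    refine ⟨c, h, ?_⟩
    rw [SimpleGraph.Walk.support_cons, List.mem_cons]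
    exact Or.inr q.start_mem_support

lemma reach_support {a b : V} (p : H.Walk a b) (hp : p.IsPath) (hab : a ≠ b)
    (da : ∀ u₁ u₂, H.Adj a u₁ → H.Adj a u₂ → u₁ = u₂)
    (db : ∀ u₁ u₂, H.Adj b u₁ → H.Adj b u₂ → u₁ = u₂)
    (d2 : ∀ w u₁ u₂ u₃, H.Adj w u₁ → H.Adj w u₂ → H.Adj w u₃ →
      u₁ = u₂ ∨ u₁ = u₃ ∨ u₂ = u₃) :
    ∀ v, H.Reachable a v → v ∈ p.support := by
  intro v hr
  rw [SimpleGraph.reachable_iff_reflTransGen] at hr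
  induction hr with
  | refl => exact p.start_mem_support
  | @tail w v' hst hadj ih =>
    by_cases hwa : w = a
    · subst hwa
      obtain ⟨u, hu, hus⟩ := head_nbr p hab
      rw [da v' u hadj hu]
      exact hus
    · by_cases hwb : w = b
      · subst hwb
        obtain ⟨u, hu, hus⟩ := head_nbr p.reverse hab.symm
        rw [db v' u hadj hu]
        rwa [SimpleGraph.Walk.support_reverse, List.mem_reverse] at hus
      · obtain ⟨u₁, u₂, h12, ha1, ha2, hs1, hs2⟩ := interior_two p hp ih hwa hwb
        rcases d2 w v' u₁ u₂ hadj ha1 ha2 with h' | h' | h'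
        · rw [h']; exact hs1
        · rw [h']; exact hs2
        · exact absurd h' h12

lemma no_three [DecidableEq V] {a b z : V} (hab : a ≠ b) (hza : z ≠ a) (hzb : z ≠ b)
    (da : ∀ u₁ u₂, H.Adj a u₁ → H.Adj a u₂ → u₁ = u₂)
    (db : ∀ u₁ u₂, H.Adj b u₁ → H.Adj b u₂ → u₁ = u₂)
    (dz : ∀ u₁ u₂, H.Adj z u₁ → H.Adj z u₂ → u₁ = u₂)
    (d2 : ∀ w u₁ u₂ u₃, H.Adj w u₁ → H.Adj w u₂ → H.Adj w u₃ →
      u₁ = u₂ ∨ u₁ = u₃ ∨ u₂ = u₃)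
    (hr : H.Reachable a b) (hrz : H.Reachable a z) : False := by
  obtain ⟨w⟩ := hr
  let p := w.toPath
  have hz : z ∈ (p : H.Walk a b).support :=
    reach_support p p.2 hab da db d2 z hrz
  obtain ⟨u₁, u₂, h12, ha1, ha2, -, -⟩ := interior_two (p : H.Walk a b) p.2 hz hza hzb
  exact h12 (dz u₁ u₂ ha1 ha2)

end PathLemma

namespace PC

variable {n : ℕ}

lemma adj_of_some {C : PC G n} {v w : V} {col : Fin n} (h : C.f s(v, w) = some col) :
    G.Adj v w := by
  have := C.supp s(v, w) (by rw [h]; simp)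
  rwa [SimpleGraph.mem_edgeSet] at this

lemma same_color_eq {C : PC G n} {v u₁ u₂ : V} {col : Fin n}
    (h1 : C.f s(v, u₁) = some col) (h2 : C.f s(v, u₂) = some col) : u₁ = u₂ := by
  by_contra hne
  exact C.proper' (adj_of_some h1) (adj_of_some h2) hne h1 h2

lemma cd_unique_of_free_d {C : PC G n} {c d : Fin n} {v : V} (h : C.free v d) :
    ∀ u₁ u₂, (cdGraph C c d).Adj v u₁ → (cdGraph C c d).Adj v u₂ → u₁ = u₂ := by
  intro u₁ u₂ h1 h2
  rcases h1 with h1 | h1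
  · rcases h2 with h2 | h2
    · exact same_color_eq h1 h2
    · exact absurd h2 (free_all C h u₂)
  · exact absurd h1 (free_all C h u₁)

lemma cd_unique_of_free_c {C : PC G n} {c d : Fin n} {v : V} (h : C.free v c) :
    ∀ u₁ u₂, (cdGraph C c d).Adj v u₁ → (cdGraph C c d).Adj v u₂ → u₁ = u₂ := by
  intro u₁ u₂ h1 h2
  rcases h1 with h1 | h1
  · exact absurd h1 (free_all C h u₁)
  · rcases h2 with h2 | h2
    · exact absurd h2 (free_all C h u₂)
    · exact same_color_eq h1 h2

lemma cd_deg_two {C : PC G n} {c d : Fin n} :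
    ∀ w u₁ u₂ u₃, (cdGraph C c d).Adj w u₁ → (cdGraph C c d).Adj w u₂ →
      (cdGraph C c d).Adj w u₃ → u₁ = u₂ ∨ u₁ = u₃ ∨ u₂ = u₃ := by
  intro w u₁ u₂ u₃ h1 h2 h3
  rcases h1 with h1 | h1 <;> rcases h2 with h2 | h2 <;> rcases h3 with h3 | h3
  · exact Or.inl (same_color_eq h1 h2)
  · exact Or.inl (same_color_eq h1 h2)
  · exact Or.inr (Or.inl (same_color_eq h1 h3))
  · exact Or.inr (Or.inr (same_color_eq h2 h3))
  · exact Or.inr (Or.inr (same_color_eq h2 h3))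
  · exact Or.inr (Or.inl (same_color_eq h1 h3))
  · exact Or.inl (same_color_eq h1 h2)
  · exact Or.inl (same_color_eq h1 h2)

/-- fan relation: the edge to `v` is coloured with a colour free at `u`. -/
def FanRel (C : PC G n) (x : V) (u v : V) : Prop :=
  ∃ col, C.f s(x, v) = some col ∧ C.free u col

/-- `y₀ :: L` is a fan at `x` with first (uncoloured) edge `x y₀`. -/
def IsFan (C : PC G n) (x y₀ : V) (L : List V) : Prop :=
  (y₀ :: L).Nodup ∧ (∀ y ∈ y₀ :: L, G.Adj x y) ∧ C.f s(x, y₀) = none ∧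
    List.Chain' (FanRel C x) (y₀ :: L)

lemma erase_apply_same (C : PC G n) (e₀ : Sym2 V) : (C.erase e₀).f e₀ = none :=
  Function.update_self _ _ _

lemma chain'_transfer {C C' : PC G n} {x : V} :
    ∀ M : List V, List.Chain' (FanRel C x) M →
      (∀ u ∈ M, ∀ v ∈ M.tail, ∀ col : Fin n, C.f s(x, v) = some col → C.free u col →
        C'.f s(x, v) = some col ∧ C'.free u col) →
      List.Chain' (FanRel C' x) M := by
  intro M
  induction M with
  | nil => intro _ _; exact List.isChain_nil
  | cons u M ih =>
    intro hch h2
    cases M with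
    | nil => exact List.isChain_singleton u
    | cons v M' =>
      obtain ⟨⟨col, hcol, hfr⟩, hch'⟩ := List.isChain_cons_cons.1 hch
      obtain ⟨hv1, hv2⟩ := h2 u (by simp) v (by simp) col hcol hfr
      refine List.isChain_cons_cons.2 ⟨⟨col, hv1, hv2⟩, ?_⟩
      refine ih hch' ?_
      intro u' hu' v' hv' col' hcol' hfr'
      exact h2 u' (by simp [hu']) v' (by
        simp only [List.tail_cons] at hv' ⊢
        exact List.mem_cons_of_mem _ hv') col' hcol' hfr'

/-- rotating a fan: shift colours down along the fan, leaving the last edge uncoloured. -/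
lemma rotate (C : PC G n) (x y₀ : V) (L : List V) (hxy : G.Adj x y₀)
    (hf : IsFan C x y₀ L) :
    ∃ C' : PC G n,
      C'.f s(x, (y₀ :: L).getLast (List.cons_ne_nil _ _)) = none ∧
      (∀ e : Sym2 V, (∀ y ∈ y₀ :: L, e ≠ s(x, y)) → C'.f e = C.f e) ∧
      (∀ col, C.free x col → C'.free x col) ∧
      (∀ col, C.free ((y₀ :: L).getLast (List.cons_ne_nil _ _)) col →
        C'.free ((y₀ :: L).getLast (List.cons_ne_nil _ _)) col) ∧
      (∀ e : Sym2 V, (C.f e ≠ none ∨ e = s(x, y₀)) →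
        e ≠ s(x, (y₀ :: L).getLast (List.cons_ne_nil _ _)) → C'.f e ≠ none) := by
  induction L generalizing C y₀ with
  | nil =>
    refine ⟨C, ?_, fun e _ => rfl, fun _ h => h, fun _ h => h, ?_⟩
    · simpa using hf.2.2.1
    · intro e he hne
      rcases he with he | he
      · exact he
      · simp only [List.getLast_singleton] at hne
        exact absurd he hne
  | cons y₁ L' ih =>
    obtain ⟨hnd, hadj, hy₀, hch⟩ := hf
    have hne01 : y₀ ≠ y₁ := by
      intro h; rw [h] at hnd
      exact (List.nodup_cons.1 hnd).1 List.mem_cons_self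
    have hadj1 : G.Adj x y₁ := hadj y₁ (by simp)
    have hkey : s(x, y₀) ≠ s(x, y₁) := key_ne hxy hne01
    obtain ⟨⟨c₁, hc₁, hfr⟩, hch'⟩ := List.isChain_cons_cons.1 hch
    have hDfx : (C.erase s(x, y₁)).free x c₁ := by
      intro w hw hcon
      by_cases hwy : w = y₁
      · rw [hwy, erase_apply_same] at hcon; exact Option.some_ne_none _ hcon.symm
      · rw [erase_apply _ _ _ (key_ne hw hwy)] at hcon
        exact hwy (same_color_eq hcon hc₁)
    have hDfy : (C.erase s(x, y₁)).free y₀ c₁ := erase_free _ _ hfr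
    set C₁ := (C.erase s(x, y₁)).paint x y₀ c₁ hxy hDfx hDfy with hC₁def
    have hC₁y₀ : C₁.f s(x, y₀) = some c₁ := paint_apply _
    have hC₁y₁ : C₁.f s(x, y₁) = none := by
      rw [paint_apply_ne _ _ (Ne.symm hkey)]
      exact erase_apply_same _ _
    have hC₁other : ∀ e : Sym2 V, e ≠ s(x, y₀) → e ≠ s(x, y₁) → C₁.f e = C.f e := by
      intro e h0 h1
      rw [paint_apply_ne _ _ h0, erase_apply _ _ _ h1]
    have hfree_tr : ∀ u : V, u ≠ x → u ≠ y₀ → ∀ col, C.free u col → C₁.free u col := by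
      intro u hux hu0 col hfree w hw hcon
      by_cases h1 : s(u, w) = s(x, y₁)
      · rw [h1, hC₁y₁] at hcon; exact Option.some_ne_none _ hcon.symm
      · by_cases h0 : s(u, w) = s(x, y₀)
        · rcases Sym2.eq_iff.1 h0 with ⟨h2, -⟩ | ⟨h2, -⟩
          · exact hux h2
          · exact hu0 h2
        · rw [hC₁other _ h0 h1] at hcon
          exact hfree w hw hcon
    have hfan1 : IsFan C₁ x y₁ L' := by
      refine ⟨List.Nodup.of_cons hnd, fun y hy => hadj y (List.mem_cons_of_mem _ hy),
        hC₁y₁, ?_⟩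
      refine chain'_transfer _ hch' ?_
      intro u hu v hv col hcol h'
      constructor
      swap
      · refine hfree_tr u ?_ ?_ col h'
        · exact fun h => G.loopless.irrefl x (h ▸ hadj u (List.mem_cons_of_mem _ hu))
        · intro h
          exact (List.nodup_cons.1 hnd).1 (h ▸ hu)
      · have hv' : v ∈ L' := hv
        have hvy₀ : v ≠ y₀ := fun h =>
          (List.nodup_cons.1 hnd).1 (h ▸ List.mem_cons_of_mem _ hv')
        have hvy₁ : v ≠ y₁ := fun h =>
          (List.nodup_cons.1 (List.Nodup.of_cons hnd)).1 (h ▸ hv')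
        have hadjv : G.Adj x v :=
          hadj v (List.mem_cons_of_mem _ (List.mem_cons_of_mem _ hv'))
        rw [hC₁other _ (key_ne hadjv hvy₀) (key_ne hadjv hvy₁)]
        exact hcol
    obtain ⟨C', h1, h2, h3, h4, h5⟩ := ih C₁ y₁ hadj1 hfan1
    have hgl : (y₀ :: y₁ :: L').getLast (List.cons_ne_nil _ _) =
        (y₁ :: L').getLast (List.cons_ne_nil _ _) := List.getLast_cons _
    have hglmem : (y₁ :: L').getLast (List.cons_ne_nil _ _) ∈ y₁ :: L' :=
      List.getLast_mem _
    refine ⟨C', ?_, ?_, ?_, ?_, ?_⟩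
    · rw [hgl]; exact h1
    · intro e he
      rw [h2 e (fun y hy => he y (List.mem_cons_of_mem _ hy))]
      exact hC₁other e (he y₀ (by simp)) (he y₁ (by simp))
    · intro col hfree
      refine h3 col ?_
      intro w hw hcon
      by_cases hk1 : s(x, w) = s(x, y₁)
      · rw [hk1, hC₁y₁] at hcon; exact Option.some_ne_none _ hcon.symm
      · by_cases hk0 : s(x, w) = s(x, y₀)
        · rw [hk0, hC₁y₀] at hcon
          exact hfree y₁ hadj1 (hcon ▸ hc₁)
        · rw [hC₁other _ hk0 hk1] at hcon
          exact hfree w hw hcon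
    · intro col hfree
      rw [hgl] at hfree ⊢
      refine h4 col ?_
      have hglx : (y₁ :: L').getLast (List.cons_ne_nil _ _) ≠ x := fun h =>
        G.loopless.irrefl x (h ▸ hadj _ (List.mem_cons_of_mem _ hglmem))
      have hgl0 : (y₁ :: L').getLast (List.cons_ne_nil _ _) ≠ y₀ := fun h =>
        (List.nodup_cons.1 hnd).1 (h ▸ hglmem)
      exact hfree_tr _ hglx hgl0 col hfree
    · intro e he hne
      rw [hgl] at hne
      refine h5 e ?_ hne
      by_cases hk1 : e = s(x, y₁)
      · exact Or.inr hk1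
      · left
        by_cases hk0 : e = s(x, y₀)
        · rw [hk0, hC₁y₀]; simp
        · rw [hC₁other _ hk0 hk1]
          rcases he with he | he
          · exact he
          · exact absurd he hk0

/-- the fan cannot be extended. -/
def FanMax (C : PC G n) (x y₀ : V) (L : List V) : Prop :=
  ∀ w, G.Adj x w → w ∉ y₀ :: L → ∀ col, C.f s(x, w) = some col →
    ¬ C.free ((y₀ :: L).getLast (List.cons_ne_nil _ _)) col

lemma exists_max_fan (C : PC G n) {x y₀ : V} (hxy : G.Adj x y₀)
    (hy₀ : C.f s(x, y₀) = none) :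
    ∃ L, IsFan C x y₀ L ∧ FanMax C x y₀ L := by
  classical
  suffices h : ∀ j (L : List V), IsFan C x y₀ L →
      Fintype.card V ≤ (y₀ :: L).length + j → ∃ L', IsFan C x y₀ L' ∧ FanMax C x y₀ L' by
    refine h (Fintype.card V) [] ⟨List.nodup_singleton y₀, ?_, hy₀, List.isChain_singleton y₀⟩
      (by simp)
    intro y hy
    rw [List.mem_singleton] at hy
    rw [hy]; exact hxy
  intro j
  induction j with
  | zero =>
    intro L hf hlen
    refine ⟨L, hf, ?_⟩
    intro w hw hwn col hcol hfree
    apply hwn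
    have hnd := hf.1
    have h1 : (y₀ :: L).length ≤ Fintype.card V := hnd.length_le_card
    have h2 : (y₀ :: L).toFinset.card = (y₀ :: L).length := List.toFinset_card_of_nodup hnd
    have h3 : (y₀ :: L).toFinset = Finset.univ := by
      apply Finset.eq_univ_of_card
      rw [h2]; omega
    have : w ∈ (y₀ :: L).toFinset := by rw [h3]; exact Finset.mem_univ w
    rwa [List.mem_toFinset] at this
  | succ j ihj =>
    intro L hf hlen
    by_cases hm : FanMax C x y₀ L
    · exact ⟨L, hf, hm⟩
    · simp only [FanMax, not_forall, not_not] at hm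
      obtain ⟨w, hw, hwn, col, hcol, hfree⟩ := hm
      have hfan' : IsFan C x y₀ (L ++ [w]) := by
        obtain ⟨hnd, hadj, hy₀', hch⟩ := hf
        refine ⟨?_, ?_, hy₀', ?_⟩
        · rw [← List.cons_append]
          rw [List.nodup_append]
          refine ⟨hnd, List.nodup_singleton w, ?_⟩
          intro a ha b hb hab
          rw [List.mem_singleton] at hb
          subst hb; subst hab; exact hwn ha
        · intro y hy
          rw [← List.cons_append, List.mem_append] at hy
          rcases hy with hy | hy
          · exact hadj y hy
          · rw [List.mem_singleton] at hy; rw [hy]; exact hw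
        · rw [← List.cons_append]
          unfold List.Chain'; rw [List.isChain_append]
          refine ⟨hch, List.isChain_singleton w, ?_⟩
          intro p hp q hq
          rw [List.head?_cons, Option.mem_some_iff] at hq
          rw [List.getLast?_eq_getLast (List.cons_ne_nil _ _), Option.mem_some_iff] at hp
          subst hp; subst hq
          exact ⟨col, hcol, hfree⟩
      refine ihj (L ++ [w]) hfan' ?_
      rw [← List.cons_append, List.length_append, List.length_singleton]
      rw [List.length_cons] at hlen ⊢
      omega

lemma extend (C : PC G (G.maxDegree + 1)) {x y₀ : V} (hxy : G.Adj x y₀)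
    (hy₀ : C.f s(x, y₀) = none) :
    ∃ C' : PC G (G.maxDegree + 1),
      (∀ e : Sym2 V, C.f e ≠ none → C'.f e ≠ none) ∧ C'.f s(x, y₀) ≠ none := by
  classical
  obtain ⟨L, hfan, hmax⟩ := exists_max_fan C hxy hy₀
  have hzF : (y₀ :: L).getLast (List.cons_ne_nil _ _) ∈ y₀ :: L := List.getLast_mem _
  set z := (y₀ :: L).getLast (List.cons_ne_nil _ _) with hzdef
  have hadjz : G.Adj x z := hfan.2.1 z hzF
  obtain ⟨c, hc⟩ := exists_free C x
  obtain ⟨d, hd⟩ := exists_free C z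
  by_cases hdx : C.free x d
  · -- easy case : d is free at x, rotate the whole fan and paint the last edge d
    obtain ⟨C₃, r1, r2, r3, r4, r5⟩ := rotate C x y₀ L hxy hfan
    refine ⟨C₃.paint x z d hadjz (r3 d hdx) (r4 d hd), ?_, ?_⟩
    · intro e he
      by_cases hez : e = s(x, z)
      · rw [hez, paint_apply]; simp
      · rw [paint_apply_ne _ _ hez]
        exact r5 e (Or.inl he) hez
    · by_cases h0z : y₀ = z
      · rw [show s(x,y₀) = s(x,z) from by rw [h0z], paint_apply]; simp
      · rw [paint_apply_ne _ _ (key_ne hxy h0z)]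
        exact r5 _ (Or.inr rfl) (key_ne hxy h0z)
  · -- d appears at x, say on the edge x w with w in the fan
    have hcd : c ≠ d := fun h => hdx (h ▸ hc)
    obtain ⟨w, hw, hwd⟩ : ∃ w, G.Adj x w ∧ C.f s(x, w) = some d := by
      simp only [free, not_forall, Classical.not_imp, not_ne_iff] at hdx
      obtain ⟨w, h1, h2⟩ := hdx; exact ⟨w, h1, h2⟩
    have hwF : w ∈ y₀ :: L := by
      by_contra hwn
      exact hmax w hw hwn d hwd hd
    have hwy₀ : w ≠ y₀ := by
      intro h; rw [h, hy₀] at hwd; exact Option.some_ne_none _ hwd.symm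
    obtain ⟨P, Q, hsplit⟩ := List.append_of_mem hwF
    obtain ⟨P', hP⟩ : ∃ P', P = y₀ :: P' := by
      cases P with
      | nil =>
        rw [List.nil_append] at hsplit
        exact absurd (List.cons.inj hsplit).1.symm hwy₀
      | cons p P' =>
        refine ⟨P', ?_⟩
        rw [List.cons_append] at hsplit
        rw [(List.cons.inj hsplit).1]
    subst hP
    -- nodup facts
    have hndF : (y₀ :: L).Nodup := hfan.1
    have hndm : (w :: ((y₀ :: P') ++ Q)).Nodup := List.nodup_middle.1 (hsplit ▸ hndF)
    have hwP : w ∉ y₀ :: P' := fun h =>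
      (List.nodup_cons.1 hndm).1 (List.mem_append.2 (Or.inl h))
    have hwQ : w ∉ Q := fun h =>
      (List.nodup_cons.1 hndm).1 (List.mem_append.2 (Or.inr h))
    have hdisj : (y₀ :: P').Disjoint Q :=
      List.disjoint_of_nodup_append (List.nodup_cons.1 hndm).2
    -- chain split
    have hchF : List.Chain' (FanRel C x) ((y₀ :: P') ++ w :: Q) := hsplit ▸ hfan.2.2.2
    obtain ⟨chP, chWQ, hlink⟩ := List.isChain_append.1 hchF
    set u := (y₀ :: P').getLast (List.cons_ne_nil _ _) with hudef
    have huP : u ∈ y₀ :: P' := List.getLast_mem _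
    have huF : u ∈ y₀ :: L := by rw [hsplit]; exact List.mem_append.2 (Or.inl huP)
    have hadju : G.Adj x u := hfan.2.1 u huF
    have hRuw : FanRel C x u w := by
      refine hlink u ?_ w ?_
      · rw [List.getLast?_eq_getLast (List.cons_ne_nil _ _)]; rfl
      · rfl
    obtain ⟨col₀, hcol₀, hfru⟩ := hRuw
    have hcol₀d : col₀ = d := Option.some.inj (hcol₀.symm.trans hwd)
    rw [hcol₀d] at hfru
    -- z is in the w :: Q part
    have hglz : z = (w :: Q).getLast (List.cons_ne_nil _ _) := by
      rw [hzdef]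
      have : (y₀ :: L).getLast (List.cons_ne_nil _ _) =
          ((y₀ :: P') ++ w :: Q).getLast (by simp) := by
        congr 1
      rw [this, List.getLast_append]
      simp
    have hzwQ : z ∈ w :: Q := by rw [hglz]; exact List.getLast_mem _
    have hzu : z ≠ u := by
      intro h
      rcases List.mem_cons.1 hzwQ with h' | h'
      · exact hwP (h' ▸ h ▸ huP)
      · exact hdisj (h ▸ huP) h'
    have hzx : z ≠ x := (G.ne_of_adj hadjz).symm
    have hxu : x ≠ u := G.ne_of_adj hadju
    -- transfer lemma for edges not coloured c or d (any inversion centre)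
    have htr : ∀ (x₀ u' v' : V), v' ≠ w → ∀ col : Fin (G.maxDegree + 1),
        C.f s(x, v') = some col → C.free u' col →
        (invert C c d x₀).f s(x, v') = some col ∧ (invert C c d x₀).free u' col := by
      intro x₀ u' v' hv'w col hcol hfr
      have hcolc : col ≠ c := fun h => free_all C hc v' (h ▸ hcol)
      have hcold : col ≠ d := fun h => hv'w (same_color_eq (h ▸ hcol) hwd)
      exact ⟨invert_apply_other hcolc hcold hcol, invert_free_other hcolc hcold hfr⟩
    by_cases hreach : (cdGraph C c d).Reachable u x
    · -- the Kempe chain from u reaches x : invert at x, rotate the whole fan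
      have hnz : ¬ (cdGraph C c d).Reachable x z := fun hrz =>
        no_three hxu hzx hzu (cd_unique_of_free_c hc) (cd_unique_of_free_d hfru)
          (cd_unique_of_free_d hd) cd_deg_two hreach.symm hrz
      have f2xd : (invert C c d x).free x d :=
        invert_free_dc hcd (SimpleGraph.Reachable.refl x) hc
      have f2uc : (invert C c d x).free u c := invert_free_cd hcd hreach.symm hfru
      have f2zd : (invert C c d x).free z d := by
        intro w' hw' hcon
        rw [invert_not_reach C c d x hnz (Sym2.mem_mk_left _ _)] at hcon
        exact hd w' hw' hcon
      have hfan₂ : IsFan (invert C c d x) x y₀ L := by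
        refine ⟨hfan.1, hfan.2.1, (invert_none_iff C c d x _).2 hy₀, ?_⟩
        rw [hsplit]
        refine List.isChain_append.2 ⟨?_, ?_, ?_⟩
        · refine chain'_transfer _ chP ?_
          intro u' _ v' hv' col hcol hfr
          exact htr x u' v' (fun h => hwP (h ▸ List.mem_of_mem_tail hv')) col hcol hfr
        · refine chain'_transfer _ chWQ ?_
          intro u' _ v' hv' col hcol hfr
          have hv'Q : v' ∈ Q := hv'
          exact htr x u' v' (fun h => hwQ (h ▸ hv'Q)) col hcol hfr
        · intro p hp q hq
          rw [List.getLast?_eq_getLast (List.cons_ne_nil _ _),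
            Option.mem_some_iff] at hp
          rw [List.head?_cons, Option.mem_some_iff] at hq
          subst hp; subst hq
          exact ⟨c, invert_apply_touch_d (SimpleGraph.Reachable.refl x)
            (Sym2.mem_mk_left _ _) hwd, f2uc⟩
      obtain ⟨C₃, r1, r2, r3, r4, r5⟩ := rotate (invert C c d x) x y₀ L hxy hfan₂
      refine ⟨C₃.paint x z d hadjz (r3 d f2xd) (r4 d f2zd), ?_, ?_⟩
      · intro e he
        have he₂ : (invert C c d x).f e ≠ none := fun h =>
          he ((invert_none_iff C c d x e).1 h)
        by_cases hez : e = s(x, z)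
        · rw [hez, paint_apply]; simp
        · rw [paint_apply_ne _ _ hez]
          exact r5 e (Or.inl he₂) hez
      · by_cases h0z : y₀ = z
        · rw [show s(x,y₀) = s(x,z) from by rw [h0z], paint_apply]; simp
        · rw [paint_apply_ne _ _ (key_ne hxy h0z)]
          exact r5 _ (Or.inr rfl) (key_ne hxy h0z)
    · -- the Kempe chain from u misses x : invert at u, rotate the prefix fan
      have f2uc : (invert C c d u).free u c :=
        invert_free_cd hcd (SimpleGraph.Reachable.refl u) hfru
      have f2xc : (invert C c d u).free x c := by
        intro w' hw' hcon
        rw [invert_not_reach C c d u hreach (Sym2.mem_mk_left _ _)] at hcon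
        exact hc w' hw' hcon
      have hndP : (y₀ :: P').Nodup := by
        have := hsplit ▸ hndF
        exact this.of_append_left
      have hfanP₂ : IsFan (invert C c d u) x y₀ P' := by
        refine ⟨hndP, ?_, (invert_none_iff C c d u _).2 hy₀, ?_⟩
        · intro y hy
          exact hfan.2.1 y (by rw [hsplit]; exact List.mem_append.2 (Or.inl hy))
        · refine chain'_transfer _ chP ?_
          intro u' _ v' hv' col hcol hfr
          exact htr u u' v' (fun h => hwP (h ▸ List.mem_of_mem_tail hv')) col hcol hfr
      obtain ⟨C₃, r1, r2, r3, r4, r5⟩ := rotate (invert C c d u) x y₀ P' hxy hfanP₂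
      refine ⟨C₃.paint x u c hadju (r3 c f2xc) (r4 c f2uc), ?_, ?_⟩
      · intro e he
        have he₂ : (invert C c d u).f e ≠ none := fun h =>
          he ((invert_none_iff C c d u e).1 h)
        by_cases heu : e = s(x, u)
        · rw [heu, paint_apply]; simp
        · rw [paint_apply_ne _ _ heu]
          exact r5 e (Or.inl he₂) heu
      · by_cases h0u : y₀ = u
        · rw [show s(x,y₀) = s(x,u) from by rw [h0u], paint_apply]; simp
        · rw [paint_apply_ne _ _ (key_ne hxy h0u)]
          exact r5 _ (Or.inr rfl) (key_ne hxy h0u)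

lemma exists_total : ∃ C : PC G (G.maxDegree + 1), ∀ e ∈ G.edgeSet, C.f e ≠ none := by
  classical
  have key : ∀ (k : ℕ) (C : PC G (G.maxDegree + 1)),
      (G.edgeFinset.filter (fun e => C.f e = none)).card ≤ k →
      ∃ C' : PC G (G.maxDegree + 1), ∀ e ∈ G.edgeSet, C'.f e ≠ none := by
    intro k
    induction k with
    | zero =>
      intro C hC
      refine ⟨C, ?_⟩
      intro e he hnone
      have hmem : e ∈ G.edgeFinset.filter (fun e => C.f e = none) := by
        rw [Finset.mem_filter, SimpleGraph.mem_edgeFinset]; exact ⟨he, hnone⟩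
      rw [Finset.card_eq_zero.1 (Nat.le_zero.1 hC)] at hmem
      exact absurd hmem (Finset.notMem_empty e)
    | succ k ih =>
      intro C hC
      by_cases hall : ∀ e ∈ G.edgeSet, C.f e ≠ none
      · exact ⟨C, hall⟩
      · push_neg at hall
        obtain ⟨e, he, hnone⟩ := hall
        revert he hnone
        induction e using Sym2.ind with
        | _ x y =>
          intro he hnone
          have hadj : G.Adj x y := (SimpleGraph.mem_edgeSet G).1 he
          obtain ⟨C', hpres, hcol⟩ := extend C hadj hnone
          refine ih C' ?_
          have hmem : s(x, y) ∈ G.edgeFinset.filter (fun e => C.f e = none) := by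
            rw [Finset.mem_filter, SimpleGraph.mem_edgeFinset]; exact ⟨he, hnone⟩
          have hsub : G.edgeFinset.filter (fun e => C'.f e = none) ⊆
              (G.edgeFinset.filter (fun e => C.f e = none)).erase s(x, y) := by
            intro e' he'
            rw [Finset.mem_filter] at he'
            refine Finset.mem_erase.2 ⟨?_, ?_⟩
            · intro h; exact hcol (h ▸ he'.2)
            · rw [Finset.mem_filter]
              refine ⟨he'.1, ?_⟩
              by_contra h
              exact hpres e' h he'.2
          have h1 := Finset.card_le_card hsub
          rw [Finset.card_erase_of_mem hmem] at h1
          omega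
  exact key (G.edgeFinset.filter (fun e => (⟨fun _ => none, fun e he => absurd rfl he,
      fun x u v _ _ _ _ => rfl⟩ : PC G (G.maxDegree + 1)).f e = none)).card
    ⟨fun _ => none, fun e he => absurd rfl he, fun x u v _ _ _ _ => rfl⟩ le_rfl

end PC
end Vizing

theorem vizing_aux {V : Type*} [Fintype V] [DecidableEq V] (G : SimpleGraph V)
    [DecidableRel G.Adj] :
    ∃ c : G.edgeSet → Fin (G.maxDegree + 1),
      ∀ e f : G.edgeSet, e ≠ f → (∃ v : V, v ∈ (e : Sym2 V) ∧ v ∈ (f : Sym2 V)) →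
        c e ≠ c f := by
  obtain ⟨C, hC⟩ := Vizing.PC.exists_total (G := G)
  have hsome : ∀ e : G.edgeSet, (C.f (e : Sym2 V)).isSome :=
    fun e => Option.ne_none_iff_isSome.1 (hC e e.2)
  refine ⟨fun e => (C.f (e : Sym2 V)).get (hsome e), ?_⟩
  rintro e f hef ⟨v, hve, hvf⟩ heq
  obtain ⟨u₁, he1⟩ := Sym2.mem_iff_exists.1 hve
  obtain ⟨u₂, hf1⟩ := Sym2.mem_iff_exists.1 hvf
  have hadj1 : G.Adj v u₁ := by
    have := e.2; rw [he1] at this; exact (SimpleGraph.mem_edgeSet G).1 this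
  have hadj2 : G.Adj v u₂ := by
    have := f.2; rw [hf1] at this; exact (SimpleGraph.mem_edgeSet G).1 this
  have hne : u₁ ≠ u₂ := by
    intro h
    exact hef (Subtype.ext (he1.trans (h ▸ hf1.symm)))
  have h1 : C.f s(v, u₁) = some ((C.f (e : Sym2 V)).get (hsome e)) := by
    rw [← he1]; exact (Option.some_get _).symm
  have h2 : C.f s(v, u₂) = some ((C.f (e : Sym2 V)).get (hsome e)) := by
    rw [← hf1]
    simp only at heq
    rw [heq]
    exact (Option.some_get _).symm
  exact C.proper' hadj1 hadj2 hne h1 h2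


/-- Vizing's theorem: every simple graph has a proper edge colouring with Δ+1 colours. -/
theorem vizing {V : Type*} [Fintype V] [DecidableEq V] (G : SimpleGraph V)
    [DecidableRel G.Adj] : EdgeColorable G (G.maxDegree + 1) := by
  obtain ⟨c, hc⟩ := vizing_aux G
  exact ⟨c, hc⟩
end

section
/- If a simple graph G has maximum degree Δ ≤ k−1, then G admits a proper k-edge colouring. -/
open SimpleGraph

set_option linter.unusedSectionVars false

namespace VizingProof

variable {V : Type*} [Fintype V] [DecidableEq V] {k : ℕ}

/-- Partial proper edge colouring: colored edges are edges of `G`, and distinct edges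
sharing a vertex have distinct colours. -/
def Proper (G : SimpleGraph V) (c : Sym2 V → Option (Fin k)) : Prop :=
  (∀ e, c e ≠ none → e ∈ G.edgeSet) ∧
  ∀ u v w (a : Fin k), G.Adj u v → G.Adj u w → v ≠ w →
    c s(u,v) = some a → c s(u,w) ≠ some a

/-- colour `a` does not appear on any edge at `v`. -/
def Free (G : SimpleGraph V) (c : Sym2 V → Option (Fin k)) (v : V) (a : Fin k) : Prop :=
  ∀ w, G.Adj v w → c s(v,w) ≠ some a

variable {G : SimpleGraph V} [DecidableRel G.Adj]

lemma exists_free (c : Sym2 V → Option (Fin k)) {v : V} (hd : G.degree v < k) :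
    ∃ a : Fin k, Free G c v a := by
  classical
  set U : Finset (Fin k) := (G.neighborFinset v).biUnion (fun w => (c s(v,w)).toFinset) with hUdef
  have hU : U.card < k := by
    refine lt_of_le_of_lt (le_trans Finset.card_biUnion_le ?_) hd
    rw [SimpleGraph.degree]
    refine le_trans (Finset.sum_le_card_nsmul _ _ 1 ?_) (by simp)
    intro w _
    cases c s(v,w) <;> simp [Option.toFinset]
  have : U ≠ Finset.univ := by
    intro hq; rw [hq, Finset.card_univ, Fintype.card_fin] at hU; omega
  obtain ⟨a, ha⟩ : (Uᶜ : Finset (Fin k)).Nonempty := by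
    rw [Finset.nonempty_iff_ne_empty]
    intro hq
    exact this (by rwa [Finset.compl_eq_empty_iff] at hq)
  refine ⟨a, fun w hw hc => ?_⟩
  have : a ∈ U := Finset.mem_biUnion.2 ⟨w, by rwa [SimpleGraph.mem_neighborFinset], by simp [hc]⟩
  simp_all


section Swap

open scoped Classical

variable (c : Sym2 V → Option (Fin k)) (α β : Fin k)

/-- edges coloured `α` or `β`. -/
def Hset : Set (Sym2 V) := {e | c e = some α ∨ c e = some β}

/-- edge adjacency (sharing a vertex). -/
def EAdj (e f : Sym2 V) : Prop := ∃ v, v ∈ e ∧ v ∈ f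

/-- the `α/β` Kempe component of the edge `e₀`. -/
def Comp (e₀ : Sym2 V) : Set (Sym2 V) :=
  {e | Relation.ReflTransGen (fun e f => EAdj e f ∧ f ∈ Hset c α β) e₀ e}

noncomputable def swapped (e₀ : Sym2 V) : Sym2 V → Option (Fin k) := fun e =>
  if e ∈ Comp c α β e₀ then
    (if c e = some α then some β else if c e = some β then some α else c e)
  else c e

variable {c α β}

lemma comp_self (e₀ : Sym2 V) : e₀ ∈ Comp c α β e₀ := Relation.ReflTransGen.refl

lemma comp_subset_H {e₀ e : Sym2 V} (h₀ : e₀ ∈ Hset c α β) (h : e ∈ Comp c α β e₀) :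
    e ∈ Hset c α β := by
  induction h with
  | refl => exact h₀
  | tail _ h ih => exact h.2

lemma comp_closed {e₀ e f : Sym2 V} (he : e ∈ Comp c α β e₀) (hf : f ∈ Hset c α β)
    (hadj : EAdj e f) : f ∈ Comp c α β e₀ :=
  Relation.ReflTransGen.tail he ⟨hadj, hf⟩

lemma swapped_eq_of_not_mem {e₀ e : Sym2 V} (h : e ∉ Comp c α β e₀) :
    swapped c α β e₀ e = c e := by simp [swapped, h]

lemma swapped_none {e₀ e : Sym2 V} : swapped c α β e₀ e = none ↔ c e = none := by
  unfold swapped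
  split_ifs <;> simp_all

lemma swapped_eq_of_ne (hα : c e ≠ some α) (hβ : c e ≠ some β) {e₀ : Sym2 V} :
    swapped c α β e₀ e = c e := by
  unfold swapped
  split_ifs <;> simp_all

lemma swapped_eq_some_iff {e₀ e : Sym2 V} {a : Fin k} (hab : α ≠ β) :
    swapped c α β e₀ e = some a ↔
      (if e ∈ Comp c α β e₀ then
        (a = β ∧ c e = some α) ∨ (a = α ∧ c e = some β) ∨ (a ≠ α ∧ a ≠ β ∧ c e = some a)
      else c e = some a) := by
  unfold swapped
  split_ifs with h1 h2 h3 <;> aesop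


lemma edge_decomp {G : SimpleGraph V} {e : Sym2 V} {v : V} (he : e ∈ G.edgeSet) (hv : v ∈ e) :
    ∃ w, e = s(v,w) ∧ G.Adj v w := by
  induction e with
  | _ a b =>
    rw [Sym2.mem_iff] at hv
    rcases hv with rfl | rfl
    · exact ⟨b, rfl, he⟩
    · exact ⟨a, Sym2.eq_swap, he.symm⟩

variable {G : SimpleGraph V} [DecidableRel G.Adj]

lemma proper_swap (hc : Proper G c) (hab : α ≠ β) {e₀ : Sym2 V} (h₀ : e₀ ∈ Hset c α β) :
    Proper G (swapped c α β e₀) := by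
  constructor
  · exact fun e he => hc.1 e (fun hn => he (swapped_none.2 hn))
  · intro u v w a huv huw hvw h1 h2
    have key : ∀ b : Fin k, c s(u,v) = some b → c s(u,w) = some b → False :=
      fun b hb hb' => hc.2 u v w b huv huw hvw hb hb'
    have hadj : EAdj s(u,v) s(u,w) := ⟨u, Sym2.mem_mk_left u v, Sym2.mem_mk_left u w⟩
    rw [swapped_eq_some_iff hab] at h1 h2
    by_cases hm1 : s(u,v) ∈ Comp c α β e₀ <;> by_cases hm2 : s(u,w) ∈ Comp c α β e₀ <;>
      simp only [hm1, hm2, if_true, if_false] at h1 h2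
    · rcases h1 with ⟨rfl,h1⟩|⟨rfl,h1⟩|⟨n1,n2,h1⟩ <;>
        rcases h2 with ⟨h2e,h2⟩|⟨h2e,h2⟩|⟨m1,m2,h2⟩ <;>
        first
          | exact key _ h1 h2
          | simp_all
    · rcases h1 with ⟨rfl,h1⟩|⟨rfl,h1⟩|⟨n1,n2,h1⟩
      · exact hm2 (comp_closed hm1 (Or.inr h2) hadj)
      · exact hm2 (comp_closed hm1 (Or.inl h2) hadj)
      · exact key _ h1 h2
    · rcases h2 with ⟨rfl,h2⟩|⟨rfl,h2⟩|⟨n1,n2,h2⟩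
      · exact hm1 (comp_closed hm2 (Or.inr h1) ⟨u, Sym2.mem_mk_left u w, Sym2.mem_mk_left u v⟩)
      · exact hm1 (comp_closed hm2 (Or.inl h1) ⟨u, Sym2.mem_mk_left u w, Sym2.mem_mk_left u v⟩)
      · exact key _ h1 h2
    · exact key _ h1 h2

lemma free_swap_of_ne {γ : Fin k} (hab : α ≠ β) (hγα : γ ≠ α) (hγβ : γ ≠ β) {v : V}
    {e₀ : Sym2 V} (hf : Free G c v γ) : Free G (swapped c α β e₀) v γ := by
  intro w hw h
  rw [swapped_eq_some_iff hab] at h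
  split_ifs at h
  · rcases h with ⟨h,_⟩|⟨h,_⟩|⟨_,_,h⟩
    · exact hγβ h
    · exact hγα h
    · exact hf w hw h
  · exact hf w hw h

lemma free_swap_of_not_mem {γ : Fin k} (hab : α ≠ β) {v : V} {e₀ : Sym2 V}
    (hf : Free G c v γ) (hv : ∀ e ∈ Comp c α β e₀, v ∉ e) :
    Free G (swapped c α β e₀) v γ := by
  intro w hw h
  have hm : s(v,w) ∉ Comp c α β e₀ := fun hm => hv _ hm (Sym2.mem_mk_left v w)
  rw [swapped_eq_of_not_mem hm] at h
  exact hf w hw h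

lemma free_x_beta_swap (hc : Proper G c) (hab : α ≠ β) {x z : V} (hxz : G.Adj x z)
    (h₀ : c s(x,z) = some β) (hfx : Free G c x α) :
    Free G (swapped c α β s(x,z)) x β := by
  intro w hw h
  rw [swapped_eq_some_iff hab] at h
  split_ifs at h with hm
  · rcases h with ⟨_,h⟩|⟨h,_⟩|⟨_,h⟩
    · exact hfx w hw h
    · exact hab h.symm
    · exact h.1 rfl
  · rcases eq_or_ne w z with rfl | hne
    · exact hm (comp_self _)
    · exact hc.2 x z w β hxz hw (fun hzw => hne hzw.symm) h₀ h

lemma free_u_alpha_swap (hc : Proper G c) (hab : α ≠ β) {u : V} {e₀ : Sym2 V}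
    (h₀ : e₀ ∈ Hset c α β) (hfu : Free G c u β)
    (hu : ∃ g ∈ Comp c α β e₀, u ∈ g) : Free G (swapped c α β e₀) u α := by
  intro w hw h
  rw [swapped_eq_some_iff hab] at h
  split_ifs at h with hm
  · rcases h with ⟨h,_⟩|⟨_,h⟩|⟨h,_,_⟩
    · exact hab h
    · exact hfu w hw h
    · exact h rfl
  · obtain ⟨g, hg, hug⟩ := hu
    exact hm (comp_closed hg (Or.inl h) ⟨u, hug, Sym2.mem_mk_left u w⟩)

lemma swapped_base (hab : α ≠ β) {e₀ : Sym2 V} (h₀ : c e₀ = some β) :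
    swapped c α β e₀ e₀ = some α := by
  unfold swapped
  rw [if_pos (comp_self _), h₀, if_neg (by simp [hab.symm]), if_pos rfl]

end Swap


section Update

variable {G : SimpleGraph V} [DecidableRel G.Adj] {c : Sym2 V → Option (Fin k)}

lemma proper_uncolor (hc : Proper G c) (e₁ : Sym2 V) :
    Proper G (Function.update c e₁ none) := by
  constructor
  · intro e he
    rcases eq_or_ne e e₁ with rfl | hne
    · simp at he
    · rw [Function.update_of_ne hne] at he; exact hc.1 e he
  · intro u v w a huv huw hvw h1 h2
    rcases eq_or_ne s(u,v) e₁ with rfl | hn1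
    · simp at h1
    · rcases eq_or_ne s(u,w) e₁ with rfl | hn2
      · simp at h2
      · rw [Function.update_of_ne hn1] at h1
        rw [Function.update_of_ne hn2] at h2
        exact hc.2 u v w a huv huw hvw h1 h2

lemma proper_color (hc : Proper G c) {x u : V} {b : Fin k} (hadj : G.Adj x u)
    (hfx : Free G c x b) (hfu : Free G c u b) :
    Proper G (Function.update c s(x,u) (some b)) := by
  constructor
  · intro e he
    rcases eq_or_ne e s(x,u) with rfl | hne
    · exact hadj
    · rw [Function.update_of_ne hne] at he; exact hc.1 e he
  · intro p q r a hpq hpr hqr h1 h2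
    rcases eq_or_ne s(p,q) s(x,u) with he1 | hn1
    · have ha : a = b := by
        rw [he1, Function.update_self] at h1; exact (Option.some_inj.1 h1).symm
      subst ha
      rcases eq_or_ne s(p,r) s(x,u) with he2 | hn2
      · rw [← he2] at he1; exact absurd (Sym2.congr_right.1 he1) hqr
      · rw [Function.update_of_ne hn2] at h2
        rcases Sym2.eq_iff.1 he1 with ⟨rfl, rfl⟩ | ⟨rfl, rfl⟩
        · exact hfx r hpr h2
        · exact hfu r hpr h2
    · rw [Function.update_of_ne hn1] at h1
      rcases eq_or_ne s(p,r) s(x,u) with he2 | hn2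
      · have ha : a = b := by
          rw [he2, Function.update_self] at h2; exact (Option.some_inj.1 h2).symm
        subst ha
        rcases Sym2.eq_iff.1 he2 with ⟨rfl, rfl⟩ | ⟨rfl, rfl⟩
        · exact hfx q hpq h1
        · exact hfu q hpq h1
      · rw [Function.update_of_ne hn2] at h2
        exact hc.2 p q r a hpq hpr hqr h1 h2

end Update


section Rot

variable {G : SimpleGraph V} [DecidableRel G.Adj]

/-- fan property: the colour of `x–yᵢ₊₁` is free at `yᵢ`. -/
def FanProp (G : SimpleGraph V) (c : Sym2 V → Option (Fin k)) (x : V) (ys : List V) : Prop :=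
  ∀ i (h : i + 1 < ys.length),
    ∃ b', c s(x, ys[i+1]) = some b' ∧ Free G c (ys[i]'(Nat.lt_of_succ_lt h)) b'

lemma rot {x : V} {b : Fin k} :
    ∀ (ys : List V) (c : Sym2 V → Option (Fin k)) (hne : ys ≠ []),
    ys.Nodup → (∀ z ∈ ys, G.Adj x z) → Proper G c →
    c s(x, ys.head hne) = none → FanProp G c x ys →
    Free G c x b → Free G c (ys.getLast hne) b →
    ∃ c' : Sym2 V → Option (Fin k),
      Proper G c' ∧ (∀ e, c e ≠ none → c' e ≠ none) ∧ c' s(x, ys.head hne) ≠ none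
  | [], c, hne => absurd rfl hne
  | [y], c, hne => by
    intro _ hadj hc h0 _ hb hlast
    have hxy : G.Adj x y := hadj y (by simp)
    refine ⟨Function.update c s(x,y) (some b), proper_color hc hxy hb hlast, ?_, ?_⟩
    · intro e he
      rcases eq_or_ne e s(x,y) with rfl | hne'
      · simp
      · rwa [Function.update_of_ne hne']
    · simp
  | y₀ :: y₁ :: rest, c, hne => by
    intro hnd hadj hc h0 hfan hb hlast
    have hxy₀ : G.Adj x y₀ := hadj y₀ (by simp)
    have hxy₁ : G.Adj x y₁ := hadj y₁ (by simp)
    have hy01 : y₀ ≠ y₁ := by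
      intro h; subst h; simp at hnd
    have hy0tail : y₀ ∉ y₁ :: rest := (List.nodup_cons.1 hnd).1
    have sne : s(x,y₀) ≠ s(x,y₁) := fun h => hy01 (Sym2.congr_right.1 h)
    obtain ⟨β₀, hβcol, hβfree⟩ := hfan 0 (by simp)
    simp only [List.getElem_cons_succ, List.getElem_cons_zero] at hβcol hβfree
    set c₁ := Function.update c s(x,y₁) none with hc₁
    set c₂ := Function.update c₁ s(x,y₀) (some β₀) with hc₂
    have hc₂y₁ : c₂ s(x,y₁) = none := by
      rw [hc₂, Function.update_of_ne (Ne.symm sne), hc₁, Function.update_self]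
    have hc₂y₀ : c₂ s(x,y₀) = some β₀ := by rw [hc₂, Function.update_self]
    -- generic transfer of freeness to c₂ for vertices not in {x, y₀}
    have free_transfer : ∀ (v : V) (γ : Fin k), v ≠ x → v ≠ y₀ → Free G c v γ →
        Free G c₂ v γ := by
      intro v γ hvx hvy₀ hf w hw h
      rcases eq_or_ne s(v,w) s(x,y₁) with he | hne'
      · rw [he, hc₂y₁] at h; exact nomatch h
      · rcases eq_or_ne s(v,w) s(x,y₀) with he2 | hne2
        · have : v ∈ s(x,y₀) := he2 ▸ Sym2.mem_mk_left v w
          rw [Sym2.mem_iff] at this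
          rcases this with h' | h' <;> [exact hvx h'; exact hvy₀ h']
        · rw [hc₂, Function.update_of_ne hne2, hc₁, Function.update_of_ne hne'] at h
          exact hf w hw h
    have hfree₁x : Free G c₁ x β₀ := by
      intro w hw h
      rcases eq_or_ne s(x,w) s(x,y₁) with he | hne'
      · rw [he, hc₁, Function.update_self] at h; exact nomatch h
      · rw [hc₁, Function.update_of_ne hne'] at h
        exact hc.2 x y₁ w β₀ hxy₁ hw (fun h' => hne' (by rw [h'])) hβcol h
    have hfree₁y₀ : Free G c₁ y₀ β₀ := by
      intro w hw h
      rcases eq_or_ne s(y₀,w) s(x,y₁) with he | hne'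
      · rw [he, hc₁, Function.update_self] at h; exact nomatch h
      · rw [hc₁, Function.update_of_ne hne'] at h
        exact hβfree w hw h
    have hp₂ : Proper G c₂ := proper_color (proper_uncolor hc _) hxy₀ hfree₁x hfree₁y₀
    have hne' : (y₁ :: rest) ≠ [] := by simp
    have hlast_eq : (y₀ :: y₁ :: rest).getLast hne = (y₁ :: rest).getLast hne' :=
      List.getLast_cons hne'
    have hlastmem : (y₁ :: rest).getLast hne' ∈ y₁ :: rest := List.getLast_mem hne'
    have hxlast : G.Adj x ((y₁ :: rest).getLast hne') :=
      hadj _ (List.mem_cons_of_mem _ hlastmem)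
    obtain ⟨c', hp', hpres', hhead'⟩ :=
      rot (y₁ :: rest) c₂ hne' (List.nodup_cons.1 hnd).2
        (fun z hz => hadj z (List.mem_cons_of_mem _ hz)) hp₂ hc₂y₁
        (by -- FanProp for the tail
          intro i h
          obtain ⟨βi, hcol, hfree⟩ := hfan (i+1) (by simpa using Nat.succ_lt_succ h)
          simp only [List.getElem_cons_succ] at hcol hfree ⊢
          have hi : i < rest.length := by simpa using h
          have hv₁mem : (y₁ :: rest)[i]'(Nat.lt_of_succ_lt h) ∈ y₁ :: rest :=
            List.getElem_mem _
          have hv₂mem : rest[i]'hi ∈ rest := List.getElem_mem _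
          have hv₂ : rest[i]'hi ≠ y₀ := by
            intro h'; exact hy0tail (h' ▸ List.mem_cons_of_mem _ hv₂mem)
          have hv₂y₁ : rest[i]'hi ≠ y₁ := by
            intro h'; exact (List.nodup_cons.1 (List.nodup_cons.1 hnd).2).1 (h' ▸ hv₂mem)
          refine ⟨βi, ?_, ?_⟩
          · rw [hc₂, Function.update_of_ne (fun h' => hv₂ (Sym2.congr_right.1 h')),
              hc₁, Function.update_of_ne (fun h' => hv₂y₁ (Sym2.congr_right.1 h'))]
            exact hcol
          · refine free_transfer _ _ ?_ ?_ hfree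
            · exact fun h' => (G.ne_of_adj (hadj _ (List.mem_cons_of_mem _ hv₁mem))) h'.symm
            · exact fun h' => hy0tail (h' ▸ hv₁mem))
        (by -- Free c₂ x b
          intro w hw h
          rcases eq_or_ne s(x,w) s(x,y₀) with he | hne2
          · rw [he, hc₂y₀] at h
            exact hb y₁ hxy₁ (by rw [hβcol, h])
          · rcases eq_or_ne s(x,w) s(x,y₁) with he2 | hne3
            · rw [he2, hc₂y₁] at h; exact nomatch h
            · rw [hc₂, Function.update_of_ne hne2, hc₁, Function.update_of_ne hne3] at h
              exact hb w hw h)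
        (by -- Free c₂ last b
          refine free_transfer _ _ (fun h' => (G.ne_of_adj hxlast) h'.symm) ?_
            (hlast_eq ▸ hlast)
          exact fun h' => hy0tail (h' ▸ hlastmem))
    refine ⟨c', hp', ?_, ?_⟩
    · intro e he
      rcases eq_or_ne e s(x,y₁) with rfl | hne2
      · exact hhead'
      · refine hpres' e ?_
        rcases eq_or_ne e s(x,y₀) with rfl | hne3
        · simp [hc₂]
        · rw [hc₂, Function.update_of_ne hne3, hc₁, Function.update_of_ne hne2]
          exact he
    · exact hpres' _ (by simp [hc₂])

end Rot


section Dichotomy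

open scoped Classical

variable {G : SimpleGraph V} [DecidableRel G.Adj]
variable {c : Sym2 V → Option (Fin k)} {α β : Fin k} {e₀ : Sym2 V}

/-- edges reachable from `e₀` in at most `n` steps through the `α/β` subgraph. -/
def ReachN (c : Sym2 V → Option (Fin k)) (α β : Fin k) (e₀ : Sym2 V) : ℕ → Sym2 V → Prop
  | 0, e => e = e₀
  | n+1, e => ReachN c α β e₀ n e ∨ ∃ f, ReachN c α β e₀ n f ∧ EAdj f e ∧ e ∈ Hset c α β

lemma reachN_mono {m n : ℕ} (h : m ≤ n) {e : Sym2 V} (he : ReachN c α β e₀ m e) :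
    ReachN c α β e₀ n e := by
  induction n with
  | zero => rwa [Nat.le_zero.1 h] at he
  | succ n ih =>
    rcases Nat.lt_or_ge m (n+1) with h' | h'
    · exact Or.inl (ih (Nat.lt_succ_iff.1 h'))
    · rwa [Nat.le_antisymm h h'] at he

lemma comp_iff_reachN {e : Sym2 V} :
    e ∈ Comp c α β e₀ ↔ ∃ n, ReachN c α β e₀ n e := by
  constructor
  · intro h
    induction h with
    | refl => exact ⟨0, rfl⟩
    | tail _ h ih =>
      obtain ⟨n, hn⟩ := ih
      exact ⟨n+1, Or.inr ⟨_, hn, h.1, h.2⟩⟩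
  · rintro ⟨n, hn⟩
    induction n generalizing e with
    | zero => rw [hn]; exact comp_self e₀
    | succ n ih =>
      rcases hn with hn | ⟨f, hf, hadj, hH⟩
      · exact ih hn
      · exact comp_closed (ih hf) hH hadj

lemma reachN_Hset (h₀ : e₀ ∈ Hset c α β) {n : ℕ} {e : Sym2 V}
    (he : ReachN c α β e₀ n e) : e ∈ Hset c α β := by
  induction n generalizing e with
  | zero => rwa [he]
  | succ n ih => rcases he with he | ⟨f, _, _, hH⟩ <;> [exact ih he; exact hH]

/-- vertices covered by a set of edges. -/
noncomputable def Vf (C : Finset (Sym2 V)) : Finset V :=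
  Finset.univ.filter (fun v => ∃ e ∈ C, v ∈ e)

noncomputable def Cn (c : Sym2 V → Option (Fin k)) (α β : Fin k) (e₀ : Sym2 V) (n : ℕ) :
    Finset (Sym2 V) :=
  Finset.univ.filter (ReachN c α β e₀ n)

lemma Hset_mem_edgeSet (hc : Proper G c) {e : Sym2 V} (he : e ∈ Hset c α β) :
    e ∈ G.edgeSet := by
  rcases he with he | he <;> exact hc.1 e (by rw [he]; simp)

lemma card_Vf_Cn (hc : Proper G c) (h₀ : e₀ ∈ Hset c α β) (n : ℕ) :
    (Vf (Cn c α β e₀ n)).card ≤ (Cn c α β e₀ n).card + 1 := by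
  induction n with
  | zero =>
    have h1 : Cn c α β e₀ 0 = {e₀} := by
      ext e; simp only [Cn, Finset.mem_filter, Finset.mem_univ, true_and, Finset.mem_singleton]; exact Iff.rfl
    rw [h1]
    induction e₀ with
    | _ p q =>
      have : Vf ({s(p,q)} : Finset (Sym2 V)) ⊆ {p, q} := by
        intro v hv
        simp only [Vf, Finset.mem_filter, Finset.mem_singleton] at hv
        obtain ⟨_, e, rfl, hv⟩ := hv
        rw [Sym2.mem_iff] at hv
        simpa using hv
      calc (Vf ({s(p,q)} : Finset (Sym2 V))).card ≤ ({p, q} : Finset V).card :=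
            Finset.card_le_card this
        _ ≤ 2 := le_trans (Finset.card_insert_le _ _) (by simp)
        _ = ({s(p,q)} : Finset (Sym2 V)).card + 1 := by simp
  | succ n ih =>
    set A := Cn c α β e₀ n with hA
    set B := Cn c α β e₀ (n+1) with hB
    have hAB : A ⊆ B := by
      intro e he
      simp only [hA, hB, Cn, Finset.mem_filter, Finset.mem_univ, true_and] at he ⊢
      exact Or.inl he
    -- every new edge has an endpoint among old vertices
    have hnew : ∀ e ∈ B, e ∉ A → ∃ v ∈ Vf A, v ∈ e := by
      intro e heB heA
      simp only [hA, hB, Cn, Finset.mem_filter, Finset.mem_univ, true_and] at heB heA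
      rcases heB with h | ⟨f, hf, ⟨v, hvf, hve⟩, _⟩
      · exact absurd h heA
      · exact ⟨v, by
          simp only [Vf, Finset.mem_filter, Finset.mem_univ, true_and]
          exact ⟨f, by simp [hA, Cn, hf], hvf⟩, hve⟩
    have hinj : (Vf B \ Vf A).card ≤ (B \ A).card := by
      have hex : ∀ v ∈ Vf B \ Vf A, ∃ e ∈ B \ A, v ∈ e := by
        intro v hv
        rw [Finset.mem_sdiff] at hv
        obtain ⟨hvB, hvA⟩ := hv
        simp only [Vf, Finset.mem_filter, Finset.mem_univ, true_and] at hvB hvA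
        obtain ⟨e, heB, hve⟩ := hvB
        refine ⟨e, Finset.mem_sdiff.2 ⟨heB, fun heA => hvA ⟨e, heA, hve⟩⟩, hve⟩
      refine Finset.card_le_card_of_injOn
        (fun v => if h : ∃ e ∈ B \ A, v ∈ e then h.choose else e₀) ?_ ?_
      · intro v hv
        simp only [dif_pos (hex v hv)]
        exact (hex v hv).choose_spec.1
      · intro v₁ hv₁ v₂ hv₂ heq
        simp only [dif_pos (hex v₁ hv₁), dif_pos (hex v₂ hv₂)] at heq
        obtain ⟨he₁, hv₁e⟩ := (hex v₁ hv₁).choose_spec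
        obtain ⟨he₂, hv₂e⟩ := (hex v₂ hv₂).choose_spec
        rw [heq] at he₁ hv₁e
        rw [Finset.mem_sdiff] at he₂
        obtain ⟨w', hw'A, hw'e⟩ := hnew _ he₂.1 he₂.2
        have hnd : ¬ ((hex v₂ hv₂).choose).IsDiag :=
          G.not_isDiag_of_mem_edgeSet
            (Hset_mem_edgeSet hc (reachN_Hset h₀ (by
              have := he₂.1
              simp only [hB, Cn, Finset.mem_filter] at this
              exact this.2)))
        have hv₁A : v₁ ∉ Vf A := (Finset.mem_sdiff.1 hv₁).2
        have hv₂A : v₂ ∉ Vf A := (Finset.mem_sdiff.1 hv₂).2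
        have hv₁w : v₁ ≠ w' := fun h => hv₁A (h ▸ hw'A)
        have hv₂w : v₂ ≠ w' := fun h => hv₂A (h ▸ hw'A)
        revert hv₁e hv₂e hw'e hnd
        generalize (hex v₂ hv₂).choose = e
        intro hv₁e hv₂e hw'e hnd
        induction e with
        | _ p q =>
          rw [Sym2.mem_iff] at hv₁e hv₂e hw'e
          rw [Sym2.mk_isDiag_iff] at hnd
          rcases hv₁e with rfl | rfl <;> rcases hv₂e with h2 | h2 <;>
            rcases hw'e with rfl | rfl <;> simp_all
    have hsub : Vf B ⊆ Vf A ∪ (Vf B \ Vf A) := by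
      intro v hv
      by_cases h : v ∈ Vf A
      · exact Finset.mem_union_left _ h
      · exact Finset.mem_union_right _ (Finset.mem_sdiff.2 ⟨hv, h⟩)
    have h1 : (Vf B).card ≤ (Vf A).card + (Vf B \ Vf A).card :=
      le_trans (Finset.card_le_card hsub) (Finset.card_union_le _ _)
    have h2 : (B \ A).card = B.card - A.card := Finset.card_sdiff_of_subset hAB
    have h3 : A.card ≤ B.card := Finset.card_le_card hAB
    omega

lemma comp_finset_eq : ∃ N, ∀ e, e ∈ Comp c α β e₀ ↔ ReachN c α β e₀ N e := by
  set Sf : Finset (Sym2 V) := Finset.univ.filter (· ∈ Comp c α β e₀) with hSf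
  refine ⟨Sf.sup (fun e => if h : ∃ n, ReachN c α β e₀ n e then Nat.find h else 0), fun e => ?_⟩
  constructor
  · intro he
    obtain ⟨n, hn⟩ := comp_iff_reachN.1 he
    have hmem : e ∈ Sf := by simp [hSf, he]
    have : (if h : ∃ n, ReachN c α β e₀ n e then Nat.find h else 0) ≤
        Sf.sup (fun e => if h : ∃ n, ReachN c α β e₀ n e then Nat.find h else 0) :=
      Finset.le_sup (f := fun e => if h : ∃ n, ReachN c α β e₀ n e then Nat.find h else 0) hmem
    rw [dif_pos ⟨n, hn⟩] at this
    exact reachN_mono this (Nat.find_spec (⟨n, hn⟩ : ∃ n, ReachN c α β e₀ n e))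
  · intro he
    exact comp_iff_reachN.2 ⟨_, he⟩


lemma same_color_eq (hc : Proper G c) {v : V} {e f : Sym2 V} {a : Fin k}
    (he : e ∈ G.edgeSet) (hf : f ∈ G.edgeSet) (hve : v ∈ e) (hvf : v ∈ f)
    (hce : c e = some a) (hcf : c f = some a) : e = f := by
  obtain ⟨p, rfl, hvp⟩ := edge_decomp he hve
  obtain ⟨q, rfl, hvq⟩ := edge_decomp hf hvf
  rcases eq_or_ne p q with rfl | hpq
  · rfl
  · exact absurd hcf (hc.2 v p q a hvp hvq hpq hce)

variable (c α β e₀) in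
noncomputable def Sf : Finset (Sym2 V) := Finset.univ.filter (· ∈ Comp c α β e₀)

lemma mem_Sf {e : Sym2 V} : e ∈ Sf c α β e₀ ↔ e ∈ Comp c α β e₀ := by simp [Sf]

lemma card_Vf_Sf (hc : Proper G c) (h₀ : e₀ ∈ Hset c α β) :
    (Vf (Sf c α β e₀)).card ≤ (Sf c α β e₀).card + 1 := by
  obtain ⟨N, hN⟩ := comp_finset_eq (c := c) (α := α) (β := β) (e₀ := e₀)
  have : Sf c α β e₀ = Cn c α β e₀ N := by
    ext e
    simp only [Sf, Cn, Finset.mem_filter, Finset.mem_univ, true_and]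
    exact hN e
  rw [this]
  exact card_Vf_Cn hc h₀ N

lemma handshake (hc : Proper G c) (h₀ : e₀ ∈ Hset c α β) :
    ∑ v ∈ Vf (Sf c α β e₀), ((Sf c α β e₀).filter (fun e => v ∈ e)).card
      = 2 * (Sf c α β e₀).card := by
  have step : ∀ e ∈ Sf c α β e₀, ((Vf (Sf c α β e₀)).filter (fun v => v ∈ e)).card = 2 := by
    intro e he
    have hE : e ∈ G.edgeSet :=
      Hset_mem_edgeSet hc (comp_subset_H h₀ (mem_Sf.1 he))
    have hnd : ¬ e.IsDiag := G.not_isDiag_of_mem_edgeSet hE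
    revert hnd
    induction e with
    | _ p q =>
      intro hnd
      rw [Sym2.mk_isDiag_iff] at hnd
      have : (Vf (Sf c α β e₀)).filter (fun v => v ∈ s(p,q)) = {p, q} := by
        ext v
        simp only [Finset.mem_filter, Sym2.mem_iff, Finset.mem_insert, Finset.mem_singleton]
        constructor
        · rintro ⟨_, h⟩; exact h
        · intro h
          refine ⟨?_, h⟩
          simp only [Vf, Finset.mem_filter, Finset.mem_univ, true_and]
          exact ⟨s(p,q), he, Sym2.mem_iff.2 h⟩
      rw [this, Finset.card_pair hnd]
  calc ∑ v ∈ Vf (Sf c α β e₀), ((Sf c α β e₀).filter (fun e => v ∈ e)).card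
      = ∑ v ∈ Vf (Sf c α β e₀), ∑ e ∈ Sf c α β e₀, if v ∈ e then 1 else 0 := by
        refine Finset.sum_congr rfl fun v _ => ?_
        rw [Finset.card_filter]
    _ = ∑ e ∈ Sf c α β e₀, ∑ v ∈ Vf (Sf c α β e₀), if v ∈ e then 1 else 0 :=
        Finset.sum_comm
    _ = ∑ e ∈ Sf c α β e₀, 2 := by
        refine Finset.sum_congr rfl fun e he => ?_
        rw [← Finset.card_filter]
        exact step e he
    _ = 2 * (Sf c α β e₀).card := by
        rw [Finset.sum_const, smul_eq_mul, mul_comm]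

lemma deg_le_two (hc : Proper G c) (h₀ : e₀ ∈ Hset c α β) (v : V) :
    ((Sf c α β e₀).filter (fun e => v ∈ e)).card ≤ 2 := by
  have : ((Sf c α β e₀).filter (fun e => v ∈ e)).card ≤ ({α, β} : Finset (Fin k)).card := by
    refine Finset.card_le_card_of_injOn (fun e => (c e).getD α) ?_ ?_
    · intro e he
      rw [Finset.mem_coe, Finset.mem_filter] at he
      rcases comp_subset_H h₀ (mem_Sf.1 he.1) with h | h <;> simp [h]
    · intro e he f hf heq
      rw [Finset.mem_coe, Finset.mem_filter] at he hf
      have heH := comp_subset_H h₀ (mem_Sf.1 he.1)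
      have hfH := comp_subset_H h₀ (mem_Sf.1 hf.1)
      have heE := Hset_mem_edgeSet hc heH
      have hfE := Hset_mem_edgeSet hc hfH
      obtain ⟨a, ha⟩ : ∃ a, c e = some a := by rcases heH with h | h <;> exact ⟨_, h⟩
      obtain ⟨b, hb⟩ : ∃ b, c f = some b := by rcases hfH with h | h <;> exact ⟨_, h⟩
      have hab2 : a = b := by
        simp only [ha, hb, Option.getD_some] at heq
        exact heq
      subst hab2
      exact same_color_eq hc heE hfE he.2 hf.2 ha hb
  refine le_trans this (le_trans (Finset.card_insert_le _ _) (by simp))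

lemma deg_le_one (hc : Proper G c) (h₀ : e₀ ∈ Hset c α β) {v : V} {γ : Fin k}
    (hγ : γ = α ∨ γ = β) (hfv : Free G c v γ) :
    ((Sf c α β e₀).filter (fun e => v ∈ e)).card ≤ 1 := by
  rw [Finset.card_le_one]
  intro e he f hf
  rw [Finset.mem_filter] at he hf
  have heH := comp_subset_H h₀ (mem_Sf.1 he.1)
  have hfH := comp_subset_H h₀ (mem_Sf.1 hf.1)
  have heE := Hset_mem_edgeSet hc heH
  have hfE := Hset_mem_edgeSet hc hfH
  have hnotγ : ∀ (g : Sym2 V), g ∈ G.edgeSet → v ∈ g → c g ≠ some γ := by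
    intro g hg hvg hcg
    obtain ⟨p, rfl, hvp⟩ := edge_decomp hg hvg
    exact hfv p hvp hcg
  obtain ⟨a, ha, haH⟩ : ∃ a, c e = some a ∧ (a = α ∨ a = β) := by
    rcases heH with h | h <;> exact ⟨_, h, by simp⟩
  obtain ⟨b, hb, hbH⟩ : ∃ b, c f = some b ∧ (b = α ∨ b = β) := by
    rcases hfH with h | h <;> exact ⟨_, h, by simp⟩
  have hane : a ≠ γ := fun h => hnotγ e heE he.2 (h ▸ ha)
  have hbne : b ≠ γ := fun h => hnotγ f hfE hf.2 (h ▸ hb)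
  have hab2 : a = b := by
    rcases hγ with rfl | rfl <;> rcases haH with rfl | rfl <;> rcases hbH with rfl | rfl <;>
      simp_all
  subst hab2
  exact same_color_eq hc heE hfE he.2 hf.2 ha hb

lemma dichotomy (hc : Proper G c) (hab : α ≠ β) {x z u w : V} (hxz : G.Adj x z)
    (hzcol : c s(x,z) = some β) (hfx : Free G c x α) (hfu : Free G c u β)
    (hfw : Free G c w β) (hux : u ≠ x) (hwx : w ≠ x) (huw : u ≠ w) :
    (∀ e ∈ Comp c α β s(x,z), u ∉ e) ∨ (∀ e ∈ Comp c α β s(x,z), w ∉ e) := by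
  by_contra hcon
  push_neg at hcon
  obtain ⟨⟨eu, heu, hueu⟩, ⟨ew, hew, hwew⟩⟩ := hcon
  have h₀ : s(x,z) ∈ Hset c α β := Or.inr hzcol
  set S := Sf c α β s(x,z) with hS
  set VS := Vf S with hVS
  have hmemV : ∀ (v : V) (e : Sym2 V), e ∈ Comp c α β s(x,z) → v ∈ e → v ∈ VS := by
    intro v e he hv
    simp only [hVS, Vf, Finset.mem_filter, Finset.mem_univ, true_and]
    exact ⟨e, mem_Sf.2 he, hv⟩
  have hxV : x ∈ VS := hmemV x s(x,z) (comp_self _) (Sym2.mem_mk_left x z)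
  have huV : u ∈ VS := hmemV u eu heu hueu
  have hwV : w ∈ VS := hmemV w ew hew hwew
  set T : Finset V := {x, u, w} with hT
  have hTsub : T ⊆ VS := by
    intro v hv
    simp only [hT, Finset.mem_insert, Finset.mem_singleton] at hv
    rcases hv with rfl | rfl | rfl <;> assumption
  have hTcard : T.card = 3 := by
    rw [hT, Finset.card_insert_of_notMem (by simp [hux.symm, hwx.symm]),
      Finset.card_insert_of_notMem (by simp [huw]), Finset.card_singleton]
  have hsum := handshake hc h₀
  rw [← hS, ← hVS] at hsum
  have hsplit : ∑ v ∈ VS, (S.filter (fun e => v ∈ e)).card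
      = ∑ v ∈ VS \ T, (S.filter (fun e => v ∈ e)).card
        + ∑ v ∈ T, (S.filter (fun e => v ∈ e)).card :=
    (Finset.sum_sdiff hTsub).symm
  have hrest : ∑ v ∈ VS \ T, (S.filter (fun e => v ∈ e)).card ≤ 2 * (VS \ T).card := by
    rw [mul_comm]
    refine le_trans (Finset.sum_le_card_nsmul _ _ 2 fun v _ => deg_le_two hc h₀ v) (by simp)
  have hTle : ∑ v ∈ T, (S.filter (fun e => v ∈ e)).card ≤ 3 := by
    have : ∀ v ∈ T, (S.filter (fun e => v ∈ e)).card ≤ 1 := by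
      intro v hv
      simp only [hT, Finset.mem_insert, Finset.mem_singleton] at hv
      rcases hv with rfl | rfl | rfl
      · exact deg_le_one hc h₀ (Or.inl rfl) hfx
      · exact deg_le_one hc h₀ (Or.inr rfl) hfu
      · exact deg_le_one hc h₀ (Or.inr rfl) hfw
    refine le_trans (Finset.sum_le_card_nsmul _ _ 1 this) (by simp [hTcard])
  have hVcard : VS.card ≤ S.card + 1 := card_Vf_Sf hc h₀
  have hTVS : T.card ≤ VS.card := Finset.card_le_card hTsub
  have hsd : (VS \ T).card = VS.card - T.card := Finset.card_sdiff_of_subset hTsub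
  omega

end Dichotomy


section Extend

variable {G : SimpleGraph V} [DecidableRel G.Adj]

lemma extend (hdeg : ∀ v, G.degree v < k) {x : V} :
    ∀ (n : ℕ) (c : Sym2 V → Option (Fin k)) (ys : List V) (hne : ys ≠ []),
    Fintype.card V + 1 ≤ ys.length + n →
    ys.Nodup → (∀ z ∈ ys, G.Adj x z) → Proper G c →
    c s(x, ys.head hne) = none → FanProp G c x ys →
    ∃ c' : Sym2 V → Option (Fin k),
      Proper G c' ∧ (∀ e, c e ≠ none → c' e ≠ none) ∧ c' s(x, ys.head hne) ≠ none := by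
  intro n
  induction n with
  | zero =>
    intro c ys hne hlen hnd _ _ _ _
    exact absurd (List.Nodup.length_le_card hnd) (by omega)
  | succ n ih =>
    intro c ys hne hlen hnd hadj hc h0 hfan
    obtain ⟨b, hb⟩ := exists_free c (hdeg (ys.getLast hne))
    by_cases hbx : Free G c x b
    · exact rot ys c hne hnd hadj hc h0 hfan hbx hb
    · obtain ⟨z, hxz, hz⟩ : ∃ z, G.Adj x z ∧ c s(x,z) = some b := by
        unfold Free at hbx
        push_neg at hbx
        exact hbx
      by_cases hzys : z ∈ ys
      · -- the fan closes on itself: Kempe chain argument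
        obtain ⟨j, hj, hjz⟩ := List.mem_iff_getElem.1 hzys
        have hj0 : j ≠ 0 := by
          intro hE
          subst hE
          rw [List.head_eq_getElem_zero hne] at h0
          rw [hjz] at h0
          rw [h0] at hz
          exact nomatch hz
        obtain ⟨j', rfl⟩ : ∃ j'', j = j'' + 1 := ⟨j - 1, by omega⟩
        obtain ⟨b', hcol', hfu⟩ := hfan j' hj
        have hbb : b' = b := by
          have hjz' : ys[j'+1]'hj = z := hjz
          rw [hjz'] at hcol'
          rw [hcol'] at hz
          exact Option.some_inj.1 hz
        subst hbb
        obtain ⟨α, hα⟩ := exists_free c (hdeg x)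
        have hab : α ≠ b' := fun hE => hbx (hE ▸ hα)
        have hju : j' < ys.length := Nat.lt_of_succ_lt hj
        set u := ys[j']'hju with hu_def
        set w := ys.getLast hne with hw_def
        have hwlen : ys.length - 1 < ys.length := by omega
        have hwe : w = ys[ys.length - 1]'hwlen := List.getLast_eq_getElem hne
        have hux : u ≠ x := (hadj u (List.getElem_mem _)).ne'
        have hwx : w ≠ x := (hadj w (hw_def ▸ List.getLast_mem hne)).ne'
        have huw : u ≠ w := by
          rw [hwe]
          intro hE
          have := (List.Nodup.getElem_inj_iff hnd).1 hE
          omega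
        have h₀H : s(x,z) ∈ Hset c α b' := Or.inr hz
        have hfanne : ∀ (i : ℕ) (h2 : i + 1 < ys.length), i ≠ j' →
            ∀ (βi : Fin k), c s(x, ys[i+1]'h2) = some βi → βi ≠ α ∧ βi ≠ b' := by
          intro i h2 hij βi hcoli
          constructor
          · exact fun hE => hα _ (hadj _ (List.getElem_mem _)) (hE ▸ hcoli)
          · intro hE
            have hne2 : z ≠ ys[i+1]'h2 := by
              intro hEq
              have hjz' : ys[j'+1]'hj = z := hjz
              rw [← hjz'] at hEq
              have := (List.Nodup.getElem_inj_iff hnd).1 hEq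
              omega
            exact hc.2 x z _ b' hxz (hadj _ (List.getElem_mem _)) hne2 hz (hE ▸ hcoli)
        by_cases hu : ∃ g ∈ Comp c α b' s(x,z), u ∈ g
        · -- case B : swap the chain, rotate the whole fan
          have hwoff : ∀ e ∈ Comp c α b' s(x,z), w ∉ e := by
            rcases dichotomy hc hab hxz hz hα hfu hb hux hwx huw with hA | hB
            · exfalso
              obtain ⟨g, hg, hug⟩ := hu
              exact hA g hg hug
            · exact hB
          set c₁ := swapped c α b' s(x,z) with hc₁def
          have hp₁ : Proper G c₁ := proper_swap hc hab h₀H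
          have hfan₁ : FanProp G c₁ x ys := by
            intro i h
            rcases eq_or_ne i j' with rfl | hij
            · refine ⟨α, ?_, ?_⟩
              · have hjz' : ys[i+1]'h = z := hjz
                rw [hjz']
                exact swapped_base hab hz
              · exact free_u_alpha_swap hc hab h₀H hfu hu
            · obtain ⟨βi, hcoli, hfreei⟩ := hfan i h
              obtain ⟨hβα, hβb⟩ := hfanne i h hij βi hcoli
              have hn1 : c s(x, ys[i+1]'h) ≠ some α := by
                rw [hcoli]; exact fun hE => hβα (Option.some_inj.1 hE)
              have hn2 : c s(x, ys[i+1]'h) ≠ some b' := by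
                rw [hcoli]; exact fun hE => hβb (Option.some_inj.1 hE)
              exact ⟨βi, by rw [hc₁def, swapped_eq_of_ne hn1 hn2]; exact hcoli,
                free_swap_of_ne hab hβα hβb hfreei⟩
          obtain ⟨c', hp', hpres', hhead'⟩ :=
            rot ys c₁ hne hnd hadj hp₁ (swapped_none.2 h0) hfan₁
              (free_x_beta_swap hc hab hxz hz hα)
              (free_swap_of_not_mem hab hb hwoff)
          exact ⟨c', hp', fun e hE => hpres' e (fun hnone => hE (swapped_none.1 hnone)),
            hhead'⟩
        · -- case A : swap the chain, rotate the fan up to j'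
          have huoff : ∀ e ∈ Comp c α b' s(x,z), u ∉ e := by
            intro e he hue; exact hu ⟨e, he, hue⟩
          set c₁ := swapped c α b' s(x,z) with hc₁def
          have hp₁ : Proper G c₁ := proper_swap hc hab h₀H
          set ft := ys.take (j'+1) with hft
          have hlen_t : ft.length = j'+1 := by
            rw [hft, List.length_take]; omega
          have hne_t : ft ≠ [] := by
            intro hE; rw [hE] at hlen_t; simp at hlen_t
          have hnd_t : ft.Nodup := hnd.sublist (List.take_sublist _ _)
          have hadj_t : ∀ t ∈ ft, G.Adj x t := fun t ht => hadj t (List.take_subset _ _ ht)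
          have head_t : ft.head hne_t = ys.head hne := by
            rw [List.head_eq_getElem_zero, List.head_eq_getElem_zero]
            exact List.getElem_take
          have hfan_t : FanProp G c₁ x ft := by
            intro i h
            have h' : i + 1 < ft.length := h
            rw [hlen_t] at h'
            have h2 : i + 1 < ys.length := by omega
            obtain ⟨βi, hcoli, hfreei⟩ := hfan i h2
            obtain ⟨hβα, hβb⟩ := hfanne i h2 (by omega) βi hcoli
            have hn1 : c s(x, ys[i+1]'h2) ≠ some α := by
              rw [hcoli]; exact fun hE => hβα (Option.some_inj.1 hE)
            have hn2 : c s(x, ys[i+1]'h2) ≠ some b' := by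
              rw [hcoli]; exact fun hE => hβb (Option.some_inj.1 hE)
            have hgt1 : ft[i+1]'h = ys[i+1]'h2 := List.getElem_take
            have hgt0 : ft[i]'(Nat.lt_of_succ_lt h) = ys[i]'(by omega) := List.getElem_take
            refine ⟨βi, ?_, ?_⟩
            · rw [hgt1, hc₁def, swapped_eq_of_ne hn1 hn2]; exact hcoli
            · rw [hgt0]
              exact free_swap_of_ne hab hβα hβb hfreei
          have last_t : ft.getLast hne_t = u := by
            rw [List.getLast_eq_getElem]
            have : ft[ft.length - 1]'(by omega) = ys[ft.length - 1]'(by omega) :=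
              List.getElem_take
            rw [this]
            have : ft.length - 1 = j' := by omega
            simp only [this, hu_def]
          obtain ⟨c', hp', hpres', hhead'⟩ :=
            rot ft c₁ hne_t hnd_t hadj_t hp₁ (by rw [head_t]; exact swapped_none.2 h0) hfan_t
              (free_x_beta_swap hc hab hxz hz hα)
              (by rw [last_t]; exact free_swap_of_not_mem hab hfu huoff)
          rw [head_t] at hhead'
          exact ⟨c', hp', fun e hE => hpres' e (fun hnone => hE (swapped_none.1 hnone)),
            hhead'⟩
      · -- extend the fan with the new vertex z
        have hne' : ys ++ [z] ≠ [] := by simp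
        have head' : (ys ++ [z]).head hne' = ys.head hne := by
          rw [List.head_eq_getElem_zero, List.head_eq_getElem_zero]
          exact List.getElem_append_left (by
            cases ys with
            | nil => exact absurd rfl hne
            | cons a l => simp)
        obtain ⟨c', hp', hpres', hhead'⟩ := ih c (ys ++ [z]) hne'
          (by rw [List.length_append]; simp only [List.length_singleton]; omega)
          (hnd.append (List.nodup_singleton z)
            (fun t ht ht' => by
              rw [List.mem_singleton] at ht'
              subst ht'
              exact hzys ht))
          (fun t ht => by
            rcases List.mem_append.1 ht with h | h
            · exact hadj t h
            · rw [List.mem_singleton] at h; subst h; exact hxz)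
          hc
          (by rw [head']; exact h0)
          (by
            intro i h
            rw [List.length_append, List.length_singleton] at h
            by_cases hi : i + 1 < ys.length
            · obtain ⟨βi, hcoli, hfreei⟩ := hfan i hi
              have hgt1 : (ys ++ [z])[i+1]'(by rw [List.length_append]; simp; omega)
                  = ys[i+1]'hi := List.getElem_append_left hi
              have hgt0 : (ys ++ [z])[i]'(by rw [List.length_append]; simp; omega)
                  = ys[i]'(by omega) := List.getElem_append_left (by omega)
              exact ⟨βi, by rw [hgt1]; exact hcoli, by rw [hgt0]; exact hfreei⟩
            · have hieq : i + 1 = ys.length := by omega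
              have hgt1 : (ys ++ [z])[i+1]'(by rw [List.length_append]; simp; omega) = z := by
                rw [List.getElem_append_right (by omega)]
                simp [hieq]
              have hgt0 : (ys ++ [z])[i]'(by rw [List.length_append]; simp; omega)
                  = ys[i]'(by omega) := List.getElem_append_left (by omega)
              refine ⟨b, by rw [hgt1]; exact hz, ?_⟩
              rw [hgt0]
              have : ys.getLast hne = ys[i]'(by omega) := by
                rw [List.getLast_eq_getElem]
                congr 1
                omega
              rw [this] at hb
              exact hb)
        rw [head'] at hhead'
        exact ⟨c', hp', hpres', hhead'⟩

end Extend


section Main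

variable {G : SimpleGraph V} [DecidableRel G.Adj]

lemma complete (hdeg : ∀ v, G.degree v < k) :
    ∀ (m : ℕ) (c : Sym2 V → Option (Fin k)), Proper G c →
    (G.edgeFinset.filter (fun e => c e = none)).card ≤ m →
    ∃ c' : Sym2 V → Option (Fin k), Proper G c' ∧ ∀ e ∈ G.edgeSet, c' e ≠ none := by
  classical
  intro m
  induction m with
  | zero =>
    intro c hc hcard
    refine ⟨c, hc, fun e he hnone => ?_⟩
    have hmem : e ∈ G.edgeFinset.filter (fun e => c e = none) := by
      rw [Finset.mem_filter]
      exact ⟨SimpleGraph.mem_edgeFinset.2 he, hnone⟩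
    rw [Nat.le_zero, Finset.card_eq_zero] at hcard
    rw [hcard] at hmem
    simp at hmem
  | succ m ih =>
    intro c hc hcard
    by_cases hempty : (G.edgeFinset.filter (fun e => c e = none)) = ∅
    · exact ih c hc (by rw [hempty]; simp)
    · obtain ⟨e, he⟩ := Finset.nonempty_iff_ne_empty.2 hempty
      rw [Finset.mem_filter, SimpleGraph.mem_edgeFinset] at he
      revert he
      induction e with
      | _ x y =>
        intro he
        obtain ⟨heE, henone⟩ := he
        have hxy : G.Adj x y := heE
        obtain ⟨c', hp', hpres', hhead'⟩ := extend hdeg (Fintype.card V) c [y]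
          (by simp) (by simp) (by simp) (by simp [hxy]) hc henone
          (by intro i hi; simp at hi)
        refine ih c' hp' ?_
        have hsub : G.edgeFinset.filter (fun e => c' e = none)
            ⊆ (G.edgeFinset.filter (fun e => c e = none)).erase s(x,y) := by
          intro f hf
          rw [Finset.mem_filter] at hf
          obtain ⟨hfE, hfnone⟩ := hf
          refine Finset.mem_erase.2 ⟨?_, ?_⟩
          · intro hE
            subst hE
            exact hhead' hfnone
          · rw [Finset.mem_filter]
            refine ⟨hfE, ?_⟩
            by_contra hcon
            exact hpres' f hcon hfnone
        have hmem : s(x,y) ∈ G.edgeFinset.filter (fun e => c e = none) := by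
          rw [Finset.mem_filter, SimpleGraph.mem_edgeFinset]
          exact ⟨heE, henone⟩
        have := Finset.card_le_card hsub
        rw [Finset.card_erase_of_mem hmem] at this
        omega

end Main

end VizingProof


/-- If Δ ≤ k - 1 then G is k-edge colourable. -/
theorem edgeColorable_of_maxDegree_le {V : Type*} [Fintype V] [DecidableEq V]
    (G : SimpleGraph V) [DecidableRel G.Adj] (k : ℕ) (h : G.maxDegree ≤ k - 1) :
    EdgeColorable G k := by
  classical
  rcases Nat.eq_zero_or_pos k with rfl | hk
  · have hempty : IsEmpty G.edgeSet := by
      constructor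
      rintro ⟨e, he⟩
      revert he
      induction e with
      | _ x y =>
        intro he
        have hxy : G.Adj x y := he
        have h1 : 0 < G.degree x := by
          rw [SimpleGraph.degree_pos_iff_exists_adj]
          exact ⟨y, hxy⟩
        have h2 := G.degree_le_maxDegree x
        omega
    exact ⟨fun e => (hempty.false e).elim, fun e => (hempty.false e).elim⟩
  · have hdeg : ∀ v, G.degree v < k := by
      intro v
      have := G.degree_le_maxDegree v
      omega
    obtain ⟨c', hp', hall⟩ := VizingProof.complete hdeg
      ((G.edgeFinset.filter (fun e => (fun _ => (none : Option (Fin k))) e = none)).card)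
      (fun _ => none)
      ⟨fun e he => absurd rfl he, fun u v w a _ _ _ hsome => nomatch hsome⟩
      le_rfl
    refine ⟨fun e => (c' e.1).getD ⟨0, hk⟩, ?_⟩
    rintro e f hef ⟨v, hve, hvf⟩ heq
    obtain ⟨p, hep, hvp⟩ := VizingProof.edge_decomp e.2 hve
    obtain ⟨q, hfq, hvq⟩ := VizingProof.edge_decomp f.2 hvf
    have hpq : p ≠ q := by
      intro hE
      exact hef (Subtype.ext (by rw [hep, hfq, hE]))
    obtain ⟨a, ha⟩ := Option.ne_none_iff_exists'.1 (hall e.1 e.2)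
    obtain ⟨b, hb⟩ := Option.ne_none_iff_exists'.1 (hall f.1 f.2)
    have hab2 : a = b := by
      simp only [ha, hb, Option.getD_some] at heq
      exact heq
    subst hab2
    have hcon := hp'.2 v p q a hvp hvq hpq (by rw [← hep]; exact ha)
    exact hcon (by rw [← hfq]; exact hb)
end

section
/- Let G be a simple graph, k an integer, X the set of vertices of G of maximum degree, and H = G[X ∪ N(X)] the semi-core of G (the subgraph induced by X and all neighbours of vertices in X). Then G has a proper k-edge colouring if and only if H has a proper k-edge colouring. -/
open SimpleGraph

namespace ECAux
variable {V : Type*}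

/-- Partial proper edge colouring represented on all of `Sym2 V`. -/
def Proper (G : SimpleGraph V) {k : ℕ} (c : Sym2 V → Option (Fin k)) : Prop :=
  (∀ e, c e ≠ none → e ∈ G.edgeSet) ∧
  ∀ e f (a : Fin k), e ≠ f → (∃ v, v ∈ e ∧ v ∈ f) → c e = some a → c f ≠ some a

def Free {k : ℕ} (c : Sym2 V → Option (Fin k)) (v : V) (a : Fin k) : Prop :=
  ∀ e, v ∈ e → c e ≠ some a

lemma exists_free [Fintype V] [DecidableEq V] {G : SimpleGraph V} [DecidableRel G.Adj]
    {k : ℕ} {c : Sym2 V → Option (Fin k)} (hp : Proper G c) {v : V}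
    (hd : G.degree v < k) : ∃ a, Free c v a := by
  classical
  by_contra h
  push_neg at h
  -- for each colour choose a witnessing edge
  have hw : ∀ a : Fin k, ∃ e, v ∈ e ∧ c e = some a := by
    intro a
    obtain ⟨e, he, hce⟩ := by
      have := h a
      unfold Free at this
      push_neg at this
      exact this
    exact ⟨e, he, hce⟩
  choose f hf1 hf2 using hw
  have hinj : Function.Injective f := by
    intro a b hab
    by_contra hne
    have := hf2 b
    rw [← hab] at this
    rw [hf2 a] at this
    exact hne (by injection this)
  have hmem : ∀ a, f a ∈ G.incidenceFinset v := by
    intro a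
    rw [mem_incidenceFinset]
    exact ⟨hp.1 _ (by rw [hf2 a]; simp), hf1 a⟩
  have : Fintype.card (Fin k) ≤ (G.incidenceFinset v).card := by
    have := Finset.card_le_card_of_injOn (s := Finset.univ) f (fun a _ => hmem a)
      (fun a _ b _ hab => hinj hab)
    simpa using this
  rw [Fintype.card_fin, card_incidenceFinset_eq_degree] at this
  omega

end ECAux
namespace ECAux
variable {V : Type*}

def Total (G : SimpleGraph V) {k : ℕ} (c : Sym2 V → Option (Fin k)) : Prop :=
  ∀ e ∈ G.edgeSet, c e ≠ none

lemma edgeColorable_iff_partial (G : SimpleGraph V) (k : ℕ) :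
    EdgeColorable G k ↔ ∃ c : Sym2 V → Option (Fin k), Proper G c ∧ Total G c := by
  classical
  constructor
  · rintro ⟨c, hc⟩
    refine ⟨fun e => if h : e ∈ G.edgeSet then some (c ⟨e, h⟩) else none, ⟨?_, ?_⟩, ?_⟩
    · intro e he
      by_contra h
      simp [h] at he
    · intro e f a hef hv hce hcf
      by_cases he : e ∈ G.edgeSet
      · by_cases hf : f ∈ G.edgeSet
        · simp only [he, hf, dif_pos] at hce hcf
          have := hc ⟨e, he⟩ ⟨f, hf⟩ (by simpa [Subtype.ext_iff] using hef) hv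
          apply this
          rw [(by injection hce : c ⟨e, he⟩ = a), (by injection hcf : c ⟨f, hf⟩ = a)]
        · simp [hf] at hcf
      · simp [he] at hce
    · intro e he
      simp [he]
  · rintro ⟨c, ⟨_, hp⟩, ht⟩
    have hex : ∀ e : G.edgeSet, ∃ a, c e.1 = some a := by
      intro e
      have := ht e.1 e.2
      cases h : c e.1 with
      | none => exact absurd h this
      | some a => exact ⟨a, rfl⟩
    choose f hf using hex
    refine ⟨f, fun e f' hef hv => ?_⟩
    intro h
    exact hp e.1 f'.1 (f e) (by simpa [Subtype.ext_iff] using hef) hv (hf e)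
      (by rw [hf f', h])

/-- Monotonicity of edge colourability under injective graph maps. -/
lemma edgeColorable_mono {W : Type*} (A : SimpleGraph V) (B : SimpleGraph W) (k : ℕ)
    (φ : V → W) (hinj : Function.Injective φ)
    (hadj : ∀ u v, A.Adj u v → B.Adj (φ u) (φ v)) :
    EdgeColorable B k → EdgeColorable A k := by
  rintro ⟨c, hc⟩
  have hmem : ∀ e : A.edgeSet, Sym2.map φ e.1 ∈ B.edgeSet := by
    rintro ⟨e, he⟩
    induction e with
    | _ u v => exact hadj u v he
  refine ⟨fun e => c ⟨Sym2.map φ e.1, hmem e⟩, fun e f hef hv => ?_⟩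
  apply hc
  · intro h
    apply hef
    have := congrArg Subtype.val h
    simp only at this
    exact Subtype.ext (Sym2.map.injective hinj this)
  · obtain ⟨v, hv1, hv2⟩ := hv
    exact ⟨φ v, Sym2.mem_map.mpr ⟨v, hv1, rfl⟩, Sym2.mem_map.mpr ⟨v, hv2, rfl⟩⟩

lemma degree_le_of_edgeColorable [Fintype V] [DecidableEq V] (G : SimpleGraph V)
    [DecidableRel G.Adj] (k : ℕ) (h : EdgeColorable G k) (v : V) : G.degree v ≤ k := by
  classical
  obtain ⟨c, hc⟩ := h
  have hmem : ∀ u ∈ G.neighborFinset v, s(v, u) ∈ G.edgeSet := by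
    intro u hu
    rw [mem_neighborFinset] at hu
    exact hu
  rw [← card_neighborFinset_eq_degree, ← Fintype.card_coe, ← Fintype.card_fin k]
  refine Fintype.card_le_of_injective
    (fun u => c ⟨s(v, u.1), hmem u.1 u.2⟩) ?_
  rintro ⟨u, hu⟩ ⟨u', hu'⟩ huu'
  by_contra hne
  have hne' : u ≠ u' := by simpa using hne
  have hvu : v ≠ u := by rw [mem_neighborFinset] at hu; exact G.ne_of_adj hu
  have hvu' : v ≠ u' := by rw [mem_neighborFinset] at hu'; exact G.ne_of_adj hu'
  refine hc ⟨s(v, u), hmem u hu⟩ ⟨s(v, u'), hmem u' hu'⟩ ?_ ⟨v, by simp, by simp⟩ huu'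
  intro h
  rw [Subtype.mk.injEq, Sym2.eq_iff] at h
  rcases h with ⟨-, h⟩ | ⟨h, -⟩
  · exact hne' h
  · exact hvu' h

end ECAux
namespace ECAux
variable {V : Type*}

lemma reachable_transfer {G G' : SimpleGraph V}
    (h : ∀ a b, G.Adj a b → G'.Reachable a b) {u v : V}
    (hr : G.Reachable u v) : G'.Reachable u v := by
  obtain ⟨p⟩ := hr
  induction p with
  | nil => exact Reachable.refl _
  | cons hadj _ ih => exact (h _ _ hadj).trans ih

lemma conn_card_le [Fintype V] [DecidableEq V] :
    ∀ (n : ℕ) (G : SimpleGraph V) (_ : Fintype G.edgeSet), G.edgeFinset.card ≤ n →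
      G.Connected → Fintype.card V ≤ G.edgeFinset.card + 1 := by
  intro n
  induction n with
  | zero =>
    intro G _ hn hc
    by_cases hac : G.IsAcyclic
    · have ht : G.IsTree := ⟨hc, hac⟩
      rw [← ht.card_edgeFinset]
    · exfalso
      rw [isAcyclic_iff_forall_edge_isBridge] at hac
      push_neg at hac
      obtain ⟨e, he, -⟩ := hac
      have : G.edgeFinset.Nonempty := ⟨e, by rwa [mem_edgeFinset]⟩
      rw [← Finset.card_pos] at this
      omega
  | succ n ih =>
    intro G _ hn hc
    classical
    by_cases hac : G.IsAcyclic
    · have ht : G.IsTree := ⟨hc, hac⟩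
      rw [← ht.card_edgeFinset]
    · rw [isAcyclic_iff_forall_edge_isBridge] at hac
      push_neg at hac
      obtain ⟨e, he, hbr⟩ := hac
      induction e with
      | _ u v =>
      set G' := G.deleteEdges {s(u, v)} with hG'
      have hadj : G.Adj u v := he
      have hruv : (G \ fromEdgeSet {s(u, v)}).Reachable u v := by
        by_contra hcon
        exact hbr (isBridge_iff.mpr hcon)
      have hGG' : G' = G \ fromEdgeSet {s(u, v)} := rfl
      have hconn' : G'.Connected := by
        rw [connected_iff] at hc ⊢
        refine ⟨fun a b => ?_, hc.2⟩
        refine reachable_transfer (fun a b hab => ?_) (hc.1 a b)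
        by_cases hab' : s(a, b) = s(u, v)
        · rw [Sym2.eq_iff] at hab'
          rcases hab' with ⟨rfl, rfl⟩ | ⟨rfl, rfl⟩
          · exact hGG' ▸ hruv
          · exact (hGG' ▸ hruv).symm
        · exact Adj.reachable (by simp [hG', hab, hab'])
      have hset : G'.edgeFinset = G.edgeFinset.erase s(u, v) := by
        ext f
        simp only [mem_edgeFinset, Finset.mem_erase, hG', edgeSet_deleteEdges,
          Set.mem_diff, Set.mem_singleton_iff]
        tauto
      have hcard : G'.edgeFinset.card = G.edgeFinset.card - 1 := by
        rw [hset, Finset.card_erase_of_mem (by rwa [mem_edgeFinset])]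
      have hpos : 1 ≤ G.edgeFinset.card :=
        Finset.card_pos.mpr ⟨s(u, v), by rwa [mem_edgeFinset]⟩
      have := ih G' inferInstance (by omega) hconn'
      omega

end ECAux
namespace ECAux
variable {V : Type*}

lemma induce_reachable {G : SimpleGraph V} {s : Set V} {u v : V} (p : G.Walk u v)
    (hp : ∀ w ∈ p.support, w ∈ s) (hu : u ∈ s) (hv : v ∈ s) :
    (G.induce s).Reachable ⟨u, hu⟩ ⟨v, hv⟩ := by
  induction p with
  | nil => exact Reachable.refl _
  | @cons a b c hadj q ih =>
    have hb : b ∈ s := hp b (by simp)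
    refine Reachable.trans (Adj.reachable ?_) (ih (fun w hw => hp w (by simp [hw])) hb hv)
    simp only [comap_adj, Function.Embedding.coe_subtype]
    exact hadj

lemma three_deg_one_false [Fintype V] [DecidableEq V] (H : SimpleGraph V) [DecidableRel H.Adj]
    (x a b : V) (hd2 : ∀ v, H.degree v ≤ 2)
    (hx : H.degree x ≤ 1) (ha : H.degree a ≤ 1) (hb : H.degree b ≤ 1)
    (hxa : x ≠ a) (hxb : x ≠ b) (hab : a ≠ b)
    (hra : H.Reachable x a) (hrb : H.Reachable x b) : False := by
  classical
  set s : Set V := {v | H.Reachable x v} with hs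
  have hxs : x ∈ s := Reachable.refl x
  have has : a ∈ s := hra
  have hbs : b ∈ s := hrb
  set Hc := H.induce s with hHc
  have hconn : Hc.Connected := by
    rw [connected_iff]
    refine ⟨?_, ⟨⟨x, hxs⟩⟩⟩
    rintro ⟨p, hp⟩ ⟨q, hq⟩
    have hpq : H.Reachable p q := (hp : H.Reachable x p).symm.trans hq
    obtain ⟨w⟩ := hpq
    refine induce_reachable w (fun z hz => ?_) hp hq
    exact (hp : H.Reachable x p).trans ⟨w.takeUntil z hz⟩
  -- induced degree is at most the ambient degree
  have hdegle : ∀ v : s, Hc.degree v ≤ H.degree v.1 := by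
    rintro ⟨v, hv⟩
    rw [← card_neighborFinset_eq_degree, ← card_neighborFinset_eq_degree]
    refine Finset.card_le_card_of_injOn (fun u => u.1) (fun u hu => ?_) ?_
    · rw [Finset.mem_coe, mem_neighborFinset] at hu
      rw [Finset.mem_coe, mem_neighborFinset]
      exact hu
    · intro z _ z' _ h
      exact Subtype.ext h
  have hsum : ∑ v : s, Hc.degree v = 2 * Hc.edgeFinset.card :=
    Hc.sum_degrees_eq_twice_card_edges
  have hconnbd : Fintype.card s ≤ Hc.edgeFinset.card + 1 :=
    conn_card_le Hc.edgeFinset.card Hc inferInstance le_rfl hconn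
  -- upper bound for the sum
  set t : Finset s := {⟨x, hxs⟩, ⟨a, has⟩, ⟨b, hbs⟩} with ht
  have htcard : t.card = 3 := by
    rw [ht]
    rw [Finset.card_insert_of_notMem (by simp [Subtype.ext_iff, hxa, hxb]),
      Finset.card_insert_of_notMem (by simp [Subtype.ext_iff, hab])]
    rfl
  have htsub : t ⊆ Finset.univ := Finset.subset_univ t
  have hsum_t : ∑ v ∈ t, H.degree v.1 ≤ 3 := by
    calc ∑ v ∈ t, H.degree v.1 ≤ ∑ _v ∈ t, 1 := by
          refine Finset.sum_le_sum ?_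
          intro i hi
          rw [ht] at hi
          simp only [Finset.mem_insert, Finset.mem_singleton] at hi
          rcases hi with rfl | rfl | rfl
          · exact hx
          · exact ha
          · exact hb
      _ = 3 := by rw [Finset.sum_const, htcard]; rfl
  have hsum_rest : ∑ v ∈ Finset.univ \ t, H.degree v.1 ≤ 2 * (Fintype.card s - 3) := by
    calc ∑ v ∈ Finset.univ \ t, H.degree v.1 ≤ ∑ _v ∈ Finset.univ \ t, 2 :=
          Finset.sum_le_sum (fun i _ => hd2 i.1)
      _ = 2 * (Fintype.card s - 3) := by
          rw [Finset.sum_const, Finset.card_sdiff_of_subset htsub, htcard, Finset.card_univ]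
          ring
  have hsplit : ∑ v ∈ Finset.univ \ t, H.degree v.1 + ∑ v ∈ t, H.degree v.1
      = ∑ v : s, H.degree v.1 := Finset.sum_sdiff htsub
  have hle : ∑ v : s, Hc.degree v ≤ ∑ v : s, H.degree v.1 :=
    Finset.sum_le_sum (fun i _ => hdegle i)
  have hcard3 : 3 ≤ Fintype.card s := by
    rw [← htcard, ← Finset.card_univ]
    exact Finset.card_le_card htsub
  omega

end ECAux
namespace ECAux
variable {V : Type*} [DecidableEq V]

lemma sym2_xq_ne {x z q : V} (hxz : x ≠ z) (hqz : q ≠ z) : s(x, q) ≠ s(x, z) := by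
  intro h
  rw [Sym2.eq_iff] at h
  rcases h with ⟨-, h⟩ | ⟨h, -⟩
  · exact hqz h
  · exact hxz h

lemma proper_update_none {G : SimpleGraph V} {k : ℕ} {c : Sym2 V → Option (Fin k)}
    (hp : Proper G c) (e₀ : Sym2 V) : Proper G (Function.update c e₀ none) := by
  constructor
  · intro e he
    by_cases h : e = e₀
    · subst h; simp at he
    · rw [Function.update_of_ne h] at he
      exact hp.1 e he
  · intro e f a hef hv hce hcf
    by_cases he : e = e₀
    · subst he; simp at hce
    · by_cases hf : f = e₀
      · subst hf; simp at hcf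
      · rw [Function.update_of_ne he] at hce
        rw [Function.update_of_ne hf] at hcf
        exact hp.2 e f a hef hv hce hcf

lemma proper_update_some {G : SimpleGraph V} {k : ℕ} {c : Sym2 V → Option (Fin k)}
    (hp : Proper G c) {x y : V} (hxy : G.Adj x y) {β : Fin k}
    (hfx : Free c x β) (hfy : Free c y β) :
    Proper G (Function.update c s(x, y) (some β)) := by
  constructor
  · intro e he
    by_cases h : e = s(x, y)
    · subst h; exact hxy
    · rw [Function.update_of_ne h] at he
      exact hp.1 e he
  · intro e f a hef hv hce hcf
    by_cases he : e = s(x, y)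
    · subst he
      rw [Function.update_self] at hce
      have ha : a = β := by injection hce with h; exact h.symm
      subst ha
      have hf : f ≠ s(x, y) := fun h => hef h.symm
      rw [Function.update_of_ne hf] at hcf
      obtain ⟨v, hv1, hv2⟩ := hv
      rw [Sym2.mem_iff] at hv1
      rcases hv1 with rfl | rfl
      · exact hfx f hv2 hcf
      · exact hfy f hv2 hcf
    · rw [Function.update_of_ne he] at hce
      by_cases hf : f = s(x, y)
      · subst hf
        rw [Function.update_self] at hcf
        have ha : a = β := by injection hcf with h; exact h.symm
        subst ha
        obtain ⟨v, hv1, hv2⟩ := hv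
        rw [Sym2.mem_iff] at hv2
        rcases hv2 with rfl | rfl
        · exact hfx e hv1 hce
        · exact hfy e hv1 hce
      · rw [Function.update_of_ne hf] at hcf
        exact hp.2 e f a hef hv hce hcf

lemma chain'_imp_tail {α : Type*} {R R' : α → α → Prop} :
    ∀ {l : List α}, (∀ p ∈ l, ∀ q ∈ l.tail, R p q → R' p q) → l.Chain' R → l.Chain' R' := by
  intro l
  induction l with
  | nil => intro _ _; exact List.isChain_nil
  | cons a l ih =>
    intro h hc
    rw [List.Chain', List.isChain_cons] at hc ⊢
    refine ⟨fun b hb => ?_, ?_⟩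
    · exact h a (by simp) b (by simpa using List.mem_of_mem_head? hb) (hc.1 b hb)
    · refine ih (fun p hp q hq hR => ?_) hc.2
      exact h p (by simp [hp]) q (List.mem_of_mem_tail hq |> fun h' => by simp [h']) hR

lemma mem_ne_head_split {α : Type*} :
    ∀ (l : List α) (z : α), z ∈ l → (∀ h : l ≠ [], l.head h ≠ z) →
      ∃ l₁ w l₂, l = l₁ ++ w :: z :: l₂ := by
  intro l
  induction l with
  | nil => intro z hz; simp at hz
  | cons a l ih =>
    intro z hz hhd
    have haz : a ≠ z := hhd (by simp)
    have hzl : z ∈ l := by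
      rcases List.mem_cons.mp hz with rfl | h
      · exact absurd rfl haz
      · exact h
    cases l with
    | nil => simp at hzl
    | cons b l' =>
      by_cases hbz : b = z
      · subst hbz
        exact ⟨[], a, l', by simp⟩
      · obtain ⟨l₁, w, l₂, hsplit⟩ := ih z hzl (fun _ => by simpa using hbz)
        exact ⟨a :: l₁, w, l₂, by simp [hsplit]⟩

/-- Shifting a fan: recolour `s(x,yᵢ)` with the colour of `s(x,yᵢ₊₁)` and colour the
last fan edge with `β`. -/
lemma shift {G : SimpleGraph V} {k : ℕ} (x : V) :
    ∀ (t : List V) (y : V) (c : Sym2 V → Option (Fin k)) (β : Fin k),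
      Proper G c →
      (∀ z ∈ y :: t, G.Adj x z) → (y :: t).Nodup →
      (∀ e ∈ G.edgeSet, (c e = none ↔ e = s(x, y))) →
      List.Chain' (fun p q => ∃ a, c s(x, q) = some a ∧ Free c p a) (y :: t) →
      Free c x β → Free c ((y :: t).getLast (by simp)) β →
      ∃ c' : Sym2 V → Option (Fin k), Proper G c' ∧ Total G c' := by
  intro t
  induction t with
  | nil =>
    intro y c β hp hadj hnd hdom _hch hfx hfl
    have hxy : G.Adj x y := hadj y (by simp)
    simp only [List.getLast_singleton] at hfl
    refine ⟨Function.update c s(x, y) (some β), proper_update_some hp hxy hfx hfl, ?_⟩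
    intro e he
    by_cases h : e = s(x, y)
    · subst h; simp
    · rw [Function.update_of_ne h]
      intro hnone
      exact h ((hdom e he).mp hnone)
  | cons y' t ih =>
    intro y c β hp hadj hnd hdom hch hfx hfl
    have hxy : G.Adj x y := hadj y (by simp)
    have hxy' : G.Adj x y' := hadj y' (by simp)
    obtain ⟨γ, hγc, hγf⟩ := (List.isChain_cons_cons.mp hch).1
    have hyy' : y ≠ y' := by
      intro h; subst h; simp at hnd
    have hxney' : x ≠ y' := G.ne_of_adj hxy'
    have hxney : x ≠ y := G.ne_of_adj hxy
    have hne_edges : s(x, y) ≠ s(x, y') := sym2_xq_ne hxney' hyy'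
    set c₀ := Function.update c s(x, y') (none : Option (Fin k)) with hc₀
    set c₁ := Function.update c₀ s(x, y) (some γ) with hc₁
    have hc₀le : ∀ e a, c₀ e = some a → c e = some a := by
      intro e a he
      by_cases h : e = s(x, y')
      · subst h; simp [hc₀] at he
      · rwa [hc₀, Function.update_of_ne h] at he
    have hp₀ : Proper G c₀ := proper_update_none hp _
    have hfγx : Free c₀ x γ := by
      intro f hf hcf
      have hcf' := hc₀le f γ hcf
      by_cases h : f = s(x, y')
      · subst h; simp [hc₀] at hcf
      · exact hp.2 s(x, y') f γ (fun h' => h h'.symm) ⟨x, by simp, hf⟩ hγc hcf'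
    have hfγy : Free c₀ y γ := fun f hf hcf => hγf f hf (hc₀le f γ hcf)
    have hp₁ : Proper G c₁ := proper_update_some hp₀ hxy hfγx hfγy
    -- the new uncoloured edge is s(x, y')
    have hdom₁ : ∀ e ∈ G.edgeSet, (c₁ e = none ↔ e = s(x, y')) := by
      intro e he
      by_cases h1 : e = s(x, y)
      · subst h1
        simp only [hc₁, Function.update_self]
        exact ⟨fun h => by simp at h, fun h => absurd h hne_edges⟩
      · rw [hc₁, Function.update_of_ne h1]
        by_cases h2 : e = s(x, y')
        · subst h2; simp [hc₀]
        · rw [hc₀, Function.update_of_ne h2]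
          rw [hdom e he]
          exact ⟨fun h => absurd h h1, fun h => absurd h h2⟩
    -- transfer freeness off x,y
    have hfree_transfer : ∀ v a, v ≠ x → v ≠ y → Free c v a → Free c₁ v a := by
      intro v a hvx hvy hf f hvf hcf
      by_cases h1 : f = s(x, y)
      · subst h1
        rw [Sym2.mem_iff] at hvf
        rcases hvf with rfl | rfl
        · exact hvx rfl
        · exact hvy rfl
      · rw [hc₁, Function.update_of_ne h1] at hcf
        exact hf f hvf (hc₀le f a hcf)
    have hndt : (y' :: t).Nodup := hnd.of_cons
    have hymem : y ∉ y' :: t := by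
      intro h
      exact (List.nodup_cons.mp hnd).1 h
    -- chain for c₁ on y' :: t
    have hch₁ : List.Chain' (fun p q => ∃ a, c₁ s(x, q) = some a ∧ Free c₁ p a) (y' :: t) := by
      refine chain'_imp_tail (fun p hp' q hq hR => ?_) (List.isChain_cons_cons.mp hch).2
      obtain ⟨a, hca, hfa⟩ := hR
      have hq' : q ∈ y' :: t := List.mem_of_mem_tail hq
      have hqy : q ≠ y := fun h => hymem (h ▸ hq')
      have hqy' : q ≠ y' := by
        intro h; subst h
        exact (List.nodup_cons.mp hndt).1 hq
      have hpy : p ≠ y := fun h => hymem (h ▸ hp')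
      have hpx : p ≠ x := fun h => (G.ne_of_adj (hadj p (by simp [hp']))) h.symm
      refine ⟨a, ?_, hfree_transfer p a hpx hpy hfa⟩
      rw [hc₁, Function.update_of_ne (sym2_xq_ne hxney hqy),
        hc₀, Function.update_of_ne (sym2_xq_ne hxney' hqy')]
      exact hca
    -- β still free at x and at the last vertex
    have hβγ : β ≠ γ := by
      intro h; subst h
      exact hfx s(x, y') (by simp) hγc
    have hfx₁ : Free c₁ x β := by
      intro f hf hcf
      by_cases h1 : f = s(x, y)
      · subst h1
        rw [hc₁, Function.update_self] at hcf
        exact hβγ (by injection hcf with h; exact h.symm)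
      · rw [hc₁, Function.update_of_ne h1] at hcf
        exact hfx f hf (hc₀le f β hcf)
    have hlast_eq : (y :: y' :: t).getLast (by simp) = (y' :: t).getLast (by simp) :=
      List.getLast_cons (by simp)
    have hfl₁ : Free c₁ ((y' :: t).getLast (by simp)) β := by
      have hLmem : (y' :: t).getLast (by simp) ∈ y' :: t := List.getLast_mem _
      have hLy : (y' :: t).getLast (by simp) ≠ y := fun h => hymem (h ▸ hLmem)
      have hLx : (y' :: t).getLast (by simp) ≠ x :=
        fun h => (G.ne_of_adj (hadj _ (by simp [hLmem]))) h.symm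
      refine hfree_transfer _ β hLx hLy ?_
      rwa [hlast_eq] at hfl
    exact ih y' c₁ β hp₁ (fun z hz => hadj z (by simp [List.mem_cons] at hz ⊢; tauto))
      hndt hdom₁ hch₁ hfx₁ hfl₁

end ECAux
namespace ECAux
variable {V : Type*} [DecidableEq V]

section Flip

variable {G : SimpleGraph V} {k : ℕ}

/-- The subgraph of edges coloured `α` or `β`. -/
def kempe (c : Sym2 V → Option (Fin k)) (α β : Fin k) : SimpleGraph V where
  Adj z w := z ≠ w ∧ (c s(z, w) = some α ∨ c s(z, w) = some β)
  symm := ⟨by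
    intro z w h
    exact ⟨h.1.symm, by rw [Sym2.eq_swap]; exact h.2⟩⟩
  loopless := ⟨fun v h => h.1 rfl⟩

/-- Whether an edge meets the Kempe component of `x`. -/
def Touch (c : Sym2 V → Option (Fin k)) (α β : Fin k) (x : V) (e : Sym2 V) : Prop :=
  ∃ v ∈ e, (kempe c α β).Reachable x v

open scoped Classical in
/-- Swap the colours `α`, `β` on the Kempe component of `x`. -/
noncomputable def flip (c : Sym2 V → Option (Fin k)) (α β : Fin k) (x : V) :
    Sym2 V → Option (Fin k) :=
  fun e => if Touch c α β x e then
      (if c e = some α then some β else if c e = some β then some α else c e) else c e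

variable {c : Sym2 V → Option (Fin k)} {α β : Fin k} {x : V}

lemma flip_of_not_touch {e : Sym2 V} (h : ¬ Touch c α β x e) : flip c α β x e = c e := by
  rw [flip, if_neg h]

lemma flip_of_ne_colors {e : Sym2 V} (h1 : c e ≠ some α) (h2 : c e ≠ some β) :
    flip c α β x e = c e := by
  rw [flip]
  split_ifs <;> rfl

lemma flip_none_iff {e : Sym2 V} : flip c α β x e = none ↔ c e = none := by
  rw [flip]
  split_ifs <;> simp_all

lemma spread (hp : Proper G c) {e : Sym2 V}
    (hcol : c e = some α ∨ c e = some β) (ht : Touch c α β x e) :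
    ∀ v ∈ e, (kempe c α β).Reachable x v := by
  have hmem : e ∈ G.edgeSet := by
    apply hp.1
    rcases hcol with h | h <;> simp [h]
  have hdiag : ¬e.IsDiag := G.not_isDiag_of_mem_edgeSet hmem
  induction e with
  | _ z w =>
    have hzw : z ≠ w := by simpa using hdiag
    have hadj : (kempe c α β).Adj z w := ⟨hzw, hcol⟩
    obtain ⟨u, hu, hru⟩ := ht
    rw [Sym2.mem_iff] at hu
    intro v hv
    rw [Sym2.mem_iff] at hv
    rcases hu with rfl | rfl <;> rcases hv with rfl | rfl
    · exact hru
    · exact hru.trans hadj.reachable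
    · exact hru.trans hadj.symm.reachable
    · exact hru

lemma flip_touch_some (hαβ : α ≠ β) {e : Sym2 V} {a : Fin k} (ht : Touch c α β x e)
    (h : flip c α β x e = some a) :
    c e = some (if a = α then β else if a = β then α else a) := by
  rw [flip, if_pos ht] at h
  by_cases h1 : c e = some α
  · rw [if_pos h1] at h
    have : a = β := by injection h with h'; exact h'.symm
    subst this
    rw [if_neg hαβ.symm, if_pos rfl]
    exact h1
  · rw [if_neg h1] at h
    by_cases h2 : c e = some β
    · rw [if_pos h2] at h
      have : a = α := by injection h with h'; exact h'.symm
      subst this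
      rw [if_pos rfl]
      exact h2
    · rw [if_neg h2] at h
      have haα : a ≠ α := fun hh => h1 (hh ▸ h)
      have haβ : a ≠ β := fun hh => h2 (hh ▸ h)
      rw [if_neg haα, if_neg haβ]
      exact h

lemma flip_some_of_ne {e : Sym2 V} {a : Fin k} (h1 : a ≠ α) (h2 : a ≠ β) :
    flip c α β x e = some a ↔ c e = some a := by
  rw [flip]
  split_ifs with ht hα hβ
  · rw [hα]
    simp only [Option.some.injEq]
    exact ⟨fun h => absurd h.symm h2, fun h => absurd h.symm h1⟩
  · rw [hβ]
    simp only [Option.some.injEq]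
    exact ⟨fun h => absurd h.symm h1, fun h => absurd h.symm h2⟩
  · exact Iff.rfl
  · exact Iff.rfl

lemma flip_beta_cases (hαβ : α ≠ β) {e : Sym2 V} (h : flip c α β x e = some β) :
    c e = some α ∨ (c e = some β ∧ ¬ Touch c α β x e) := by
  by_cases ht : Touch c α β x e
  · left
    have := flip_touch_some hαβ ht h
    rwa [if_neg hαβ.symm, if_pos rfl] at this
  · right
    rw [flip_of_not_touch ht] at h
    exact ⟨h, ht⟩

lemma flip_alpha_cases (hαβ : α ≠ β) {e : Sym2 V} (h : flip c α β x e = some α) :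
    c e = some β ∨ (c e = some α ∧ ¬ Touch c α β x e) := by
  by_cases ht : Touch c α β x e
  · left
    have := flip_touch_some hαβ ht h
    rwa [if_pos rfl] at this
  · right
    rw [flip_of_not_touch ht] at h
    exact ⟨h, ht⟩

lemma flip_beta_eq (hαβ : α ≠ β) {e : Sym2 V} (hc : c e = some β)
    (ht : Touch c α β x e) : flip c α β x e = some α := by
  rw [flip, if_pos ht, if_neg (by rw [hc]; simp [Ne.symm hαβ]), if_pos hc]

lemma proper_flip (hp : Proper G c) (hαβ : α ≠ β) : Proper G (flip c α β x) := by
  constructor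
  · intro e he
    apply hp.1
    intro hnone
    exact he (by rw [flip_none_iff]; exact hnone)
  · intro e f a hef hv hce hcf
    by_cases hte : Touch c α β x e <;> by_cases htf : Touch c α β x f
    · have h1 := flip_touch_some hαβ hte hce
      have h2 := flip_touch_some hαβ htf hcf
      exact hp.2 e f _ hef hv h1 h2
    · -- e touched, f not
      have hcf' : flip c α β x f = c f := flip_of_not_touch htf
      have hce'' := flip_touch_some hαβ hte hce
      -- if c e ∈ {α, β} then f touches via the shared vertex; so c e ∉ {α, β}
      obtain ⟨v, hv1, hv2⟩ := hv
      by_cases hcol : c e = some α ∨ c e = some β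
      · exact absurd ⟨v, hv2, spread hp hcol hte v hv1⟩ htf
      · push_neg at hcol
        rw [flip_of_ne_colors hcol.1 hcol.2] at hce
        rw [hcf'] at hcf
        exact hp.2 e f a hef ⟨v, hv1, hv2⟩ hce hcf
    · have hce' : flip c α β x e = c e := flip_of_not_touch hte
      obtain ⟨v, hv1, hv2⟩ := hv
      by_cases hcol : c f = some α ∨ c f = some β
      · exact absurd ⟨v, hv1, spread hp hcol htf v hv2⟩ hte
      · push_neg at hcol
        rw [flip_of_ne_colors hcol.1 hcol.2] at hcf
        rw [hce'] at hce
        exact hp.2 e f a hef ⟨v, hv1, hv2⟩ hce hcf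
    · rw [flip_of_not_touch hte] at hce
      rw [flip_of_not_touch htf] at hcf
      exact hp.2 e f a hef hv hce hcf

lemma free_flip_of_ne {v : V} {a : Fin k} (h1 : a ≠ α) (h2 : a ≠ β)
    (hf : Free c v a) : Free (flip c α β x) v a := by
  intro e he hce
  exact hf e he ((flip_some_of_ne h1 h2).mp hce)

lemma free_flip_beta (hαβ : α ≠ β) {v : V} (hr : (kempe c α β).Reachable x v)
    (hf : Free c v α) : Free (flip c α β x) v β := by
  intro e he hce
  rcases flip_beta_cases hαβ hce with h | ⟨h, ht⟩
  · exact hf e he h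
  · exact ht ⟨v, he, hr⟩

lemma free_flip_alpha (hαβ : α ≠ β) {v : V} (hr : (kempe c α β).Reachable x v)
    (hf : Free c v β) : Free (flip c α β x) v α := by
  intro e he hce
  rcases flip_alpha_cases hαβ hce with h | ⟨h, ht⟩
  · exact hf e he h
  · exact ht ⟨v, he, hr⟩

lemma flip_eq_of_not_reachable (hp : Proper G c) {v : V}
    (hr : ¬ (kempe c α β).Reachable x v) {e : Sym2 V} (he : v ∈ e) :
    flip c α β x e = c e := by
  by_cases hcol : c e = some α ∨ c e = some β
  · by_cases ht : Touch c α β x e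
    · exact absurd (spread hp hcol ht v he) hr
    · exact flip_of_not_touch ht
  · push_neg at hcol
    exact flip_of_ne_colors hcol.1 hcol.2

lemma free_flip_of_not_reachable (hp : Proper G c) {v : V}
    (hr : ¬ (kempe c α β).Reachable x v) {a : Fin k} (hf : Free c v a) :
    Free (flip c α β x) v a := by
  intro e he hce
  rw [flip_eq_of_not_reachable hp hr he] at hce
  exact hf e he hce

lemma kempe_degree_le [Fintype V] [DecidableRel (kempe c α β).Adj] (hp : Proper G c)
    (v : V) (t : Finset (Option (Fin k)))
    (ht : ∀ z, (kempe c α β).Adj v z → c s(v, z) ∈ t) :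
    (kempe c α β).degree v ≤ t.card := by
  rw [← card_neighborFinset_eq_degree]
  refine Finset.card_le_card_of_injOn (fun z => c s(v, z)) (fun z hz => ?_) ?_
  · exact ht z ((mem_neighborFinset _ _ _).mp hz)
  · intro z hz z' hz' hzz'
    rw [Finset.mem_coe, mem_neighborFinset] at hz hz'
    by_contra hne
    obtain ⟨a, ha⟩ : ∃ a, c s(v, z) = some a := by
      rcases hz.2 with h | h <;> exact ⟨_, h⟩
    exact hp.2 s(v, z) s(v, z') a (sym2_xq_ne hz'.1 hne) ⟨v, by simp, by simp⟩ ha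
      (by have h' : c s(v, z) = c s(v, z') := hzz'; rw [← h']; exact ha)

end Flip

end ECAux
namespace ECAux
variable {V : Type*} [DecidableEq V]

lemma shift' {G : SimpleGraph V} {k : ℕ} (x : V) (l : List V) (y₀ : V)
    (c : Sym2 V → Option (Fin k)) (β : Fin k) (hne : l ≠ [])
    (hhd : l.head? = some y₀) (hp : Proper G c)
    (hadj : ∀ z ∈ l, G.Adj x z) (hnd : l.Nodup)
    (hdom : ∀ e ∈ G.edgeSet, (c e = none ↔ e = s(x, y₀)))
    (hch : List.Chain' (fun p q => ∃ a, c s(x, q) = some a ∧ Free c p a) l)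
    (hfx : Free c x β) (hfl : Free c (l.getLast hne) β) :
    ∃ c' : Sym2 V → Option (Fin k), Proper G c' ∧ Total G c' := by
  cases l with
  | nil => exact absurd rfl hne
  | cons y t =>
    have hy : y = y₀ := by simpa using hhd
    subst hy
    exact shift x t y c β hp hadj hnd hdom hch hfx hfl

/-- The Vizing-fan extension lemma: a proper partial colouring missing exactly the edge
`s(x,y₀)`, where `x` and all its neighbours have degree `< k`, extends to a total one. -/
lemma extend [Fintype V] (G : SimpleGraph V) [DecidableRel G.Adj] {k : ℕ}
    (x y₀ : V) (hxy₀ : G.Adj x y₀)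
    (hdx : G.degree x < k) (hnb : ∀ z, G.Adj x z → G.degree z < k)
    (c : Sym2 V → Option (Fin k)) (hp : Proper G c)
    (hdom : ∀ e ∈ G.edgeSet, (c e = none ↔ e = s(x, y₀))) :
    ∃ c' : Sym2 V → Option (Fin k), Proper G c' ∧ Total G c' := by
  classical
  obtain ⟨α, hfα⟩ := exists_free hp hdx
  set P : List V → Prop := fun l =>
    l.head? = some y₀ ∧ l.Nodup ∧ (∀ z ∈ l, G.Adj x z) ∧
      List.Chain' (fun p q => ∃ a, c s(x, q) = some a ∧ Free c p a) l with hPdef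
  have hP0 : P [y₀] := ⟨rfl, by simp, by simpa using hxy₀, List.isChain_singleton _⟩
  have : Nonempty V := ⟨x⟩
  set S : Finset ℕ :=
    (Finset.range (Fintype.card V + 1)).filter (fun n => ∃ l, P l ∧ l.length = n) with hSdef
  have hS1 : 1 ∈ S := by
    rw [hSdef, Finset.mem_filter, Finset.mem_range]
    refine ⟨by have := Fintype.card_pos (α := V); omega, ⟨[y₀], hP0, rfl⟩⟩
  obtain ⟨l, hPl, hlen⟩ : ∃ l, P l ∧ l.length = S.max' ⟨1, hS1⟩ := by
    have := S.max'_mem ⟨1, hS1⟩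
    exact (Finset.mem_filter.mp this).2
  have hmax : ∀ l', P l' → l'.length ≤ l.length := by
    intro l' hl'
    rw [hlen]
    apply Finset.le_max'
    rw [hSdef, Finset.mem_filter, Finset.mem_range]
    exact ⟨by have := hl'.2.1.length_le_card; omega, ⟨l', hl', rfl⟩⟩
  obtain ⟨hlhd, hlnd, hladj, hlch⟩ := hPl
  have hlne : l ≠ [] := by
    intro h
    rw [h] at hlhd
    simp at hlhd
  obtain ⟨L, hL⟩ : ∃ L, l.getLast? = some L := ⟨_, List.getLast?_eq_getLast hlne⟩
  have hLval : l.getLast hlne = L := by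
    rw [List.getLast?_eq_getLast hlne] at hL
    injection hL
  have hLmem : L ∈ l := List.mem_of_mem_getLast? (by rw [hL]; rfl)
  have hLadj : G.Adj x L := hladj L hLmem
  obtain ⟨β, hfβ⟩ := exists_free hp (hnb L hLadj)
  by_cases hfxβ : Free c x β
  · exact shift' x l y₀ c β hlne hlhd hp hladj hlnd hdom hlch hfxβ (by rw [hLval]; exact hfβ)
  -- β is used at x, say on the edge s(x, z)
  have hfxβ'' : ∃ e, x ∈ e ∧ c e = some β := by
    rw [Free] at hfxβ
    push_neg at hfxβ
    obtain ⟨e, he1, he2⟩ := hfxβ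
    exact ⟨e, he1, he2⟩
  obtain ⟨f, hxf, hcf⟩ := hfxβ''
  have hfxβ : ¬ Free c x β := by
    intro h
    exact h f hxf hcf
  have hfE : f ∈ G.edgeSet := hp.1 f (by rw [hcf]; simp)
  obtain ⟨z, hfz⟩ := Sym2.mem_iff_exists.mp hxf
  subst hfz
  have hxz : G.Adj x z := hfE
  have hαβ : α ≠ β := fun h => hfxβ (h ▸ hfα)
  have hzy₀ : z ≠ y₀ := by
    intro h
    subst h
    rw [(hdom s(x, z) hfE).mpr rfl] at hcf
    simp at hcf
  have hzL : z ≠ L := by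
    intro h
    subst h
    exact hfβ s(x, z) (by simp) hcf
  have hzl : z ∈ l := by
    by_contra hzl
    have hlong := hmax (l ++ [z]) ⟨?_, ?_, ?_, ?_⟩
    · rw [List.length_append] at hlong
      simp at hlong
    · rw [List.head?_append_of_ne_nil _ hlne]
      exact hlhd
    · rw [List.nodup_append]
      exact ⟨hlnd, by simp, by intro a ha b hb; simp at hb; subst hb; intro h; subst h; exact hzl ha⟩
    · intro u hu
      rcases List.mem_append.mp hu with h | h
      · exact hladj u h
      · simp at h; subst h; exact hxz
    · rw [List.Chain', List.isChain_append]
      refine ⟨hlch, List.isChain_singleton _, ?_⟩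
      intro p hp' q hq'
      simp only [List.head?_cons, Option.mem_def, Option.some.injEq] at hq'
      subst hq'
      rw [Option.mem_def, hL, Option.some.injEq] at hp'
      subst hp'
      exact ⟨β, hcf, hfβ⟩
  obtain ⟨l₁, w, l₂, hsp⟩ := mem_ne_head_split l z hzl
    (fun h hh => hzy₀ (by rw [List.head?_eq_head h, Option.some.injEq] at hlhd; rw [← hh, hlhd]))
  have hlnd' : (l₁ ++ w :: z :: l₂).Nodup := hsp ▸ hlnd
  have hndr : (w :: z :: l₂).Nodup := (List.nodup_append.mp hlnd').2.1
  have hdisj : List.Disjoint l₁ (w :: z :: l₂) := List.disjoint_of_nodup_append hlnd'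
  have hwz : w ≠ z := by
    have := (List.nodup_cons.mp hndr).1
    intro h; exact this (by simp [h])
  have hwl₂ : w ∉ l₂ := by
    have := (List.nodup_cons.mp hndr).1
    intro h; exact this (by simp [h])
  have hzl₂ : z ∉ l₂ := (List.nodup_cons.mp (List.nodup_cons.mp hndr).2).1
  have hznl₁ : z ∉ l₁ := fun h => hdisj h (by simp)
  have hwmem : w ∈ l := by rw [hsp]; simp
  have hxw : G.Adj x w := hladj w hwmem
  -- the chain decomposition
  have hlch' : List.Chain' (fun p q => ∃ a, c s(x, q) = some a ∧ Free c p a)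
      (l₁ ++ w :: z :: l₂) := hsp ▸ hlch
  obtain ⟨hch1, hRwz, hch2⟩ := List.isChain_append_cons_cons.mp hlch'
  have hfwβ : Free c w β := by
    obtain ⟨a, hca, hfa⟩ := hRwz
    have ha : a = β := by rw [hcf] at hca; injection hca with h; exact h.symm
    exact ha ▸ hfa
  -- l₂ is nonempty and L is its last element
  have hLr : (w :: z :: l₂).getLast? = some L := by
    rw [← hL, hsp, List.getLast?_append_of_ne_nil _ (by simp)]
  have hl₂ne : l₂ ≠ [] := by
    intro h
    subst h
    simp at hLr
    exact hzL hLr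
  have hLl₂ : L ∈ l₂ := by
    have : l₂.getLast? = some L := by
      rw [← hLr]
      have h1 : (w :: z :: l₂) = [w, z] ++ l₂ := by simp
      rw [h1, List.getLast?_append_of_ne_nil _ hl₂ne]
    exact List.mem_of_mem_getLast? (by rw [this]; rfl)
  have hwL : w ≠ L := fun h => hwl₂ (h ▸ hLl₂)
  have hxnw : x ≠ w := G.ne_of_adj hxw
  have hxnL : x ≠ L := G.ne_of_adj hLadj
  have hxnz : x ≠ z := G.ne_of_adj hxz
  -- Kempe component of x
  haveI hKdec : DecidableRel (kempe c α β).Adj := Classical.decRel _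
  have hdeg2 : ∀ v, (kempe c α β).degree v ≤ 2 := by
    intro v
    refine (kempe_degree_le hp v {some α, some β} ?_).trans ?_
    · intro u hu
      rcases hu.2 with h | h <;> simp [h]
    · exact (Finset.card_insert_le _ _).trans (by simp)
  have hdeg1 : ∀ v, Free c v α ∨ Free c v β → (kempe c α β).degree v ≤ 1 := by
    intro v hfv
    rcases hfv with hfv | hfv
    · refine (kempe_degree_le hp v {some β} ?_).trans (by simp)
      intro u hu
      rcases hu.2 with h | h
      · exact absurd h (hfv s(v, u) (by simp))
      · simp [h]
    · refine (kempe_degree_le hp v {some α} ?_).trans (by simp)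
      intro u hu
      rcases hu.2 with h | h
      · simp [h]
      · exact absurd h (hfv s(v, u) (by simp))
  -- common transformation of fan links under the flip
  set c' := flip c α β x with hc'def
  have htrans : ∀ p q, q ∈ l → q ≠ z →
      (∃ a, c s(x, q) = some a ∧ Free c p a) →
      (∃ a, c' s(x, q) = some a ∧ Free c' p a) := by
    rintro p q hql hqz ⟨a, hca, hfa⟩
    have haα : a ≠ α := by
      intro h
      rw [h] at hca
      exact hfα s(x, q) (by simp) hca
    have haβ : a ≠ β := by
      intro h
      rw [← h] at hcf
      exact hp.2 s(x, q) s(x, z) a (sym2_xq_ne hxnz hqz) ⟨x, by simp, by simp⟩ hca hcf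
    exact ⟨a, (flip_some_of_ne haα haβ).mpr hca, free_flip_of_ne haα haβ hfa⟩
  have hp' : Proper G c' := proper_flip hp hαβ
  have hdom' : ∀ e ∈ G.edgeSet, (c' e = none ↔ e = s(x, y₀)) := by
    intro e he
    rw [hc'def, flip_none_iff]
    exact hdom e he
  have hfx'β : Free c' x β := free_flip_beta hαβ (Reachable.refl x) hfα
  have hch1' : List.Chain' (fun p q => ∃ a, c' s(x, q) = some a ∧ Free c' p a) (l₁ ++ [w]) := by
    refine chain'_imp_tail (fun p hpm q hqm hRpq => ?_) hch1
    have hqmem : q ∈ l₁ ++ [w] := List.mem_of_mem_tail hqm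
    have hql : q ∈ l := by
      rw [hsp]
      rcases List.mem_append.mp hqmem with h | h
      · exact List.mem_append.mpr (Or.inl h)
      · simp at h; subst h; simp
    have hqz : q ≠ z := by
      intro h; subst h
      rcases List.mem_append.mp hqmem with h | h
      · exact hznl₁ h
      · simp at h; exact hwz h.symm
    exact htrans p q hql hqz hRpq
  by_cases hrw : (kempe c α β).Reachable x w
  · -- Case B2 : shift the whole fan after flipping
    have hrL : ¬ (kempe c α β).Reachable x L := by
      intro hrL
      exact three_deg_one_false (kempe c α β) x w L hdeg2
        (hdeg1 x (Or.inl hfα)) (hdeg1 w (Or.inr hfwβ))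
        (hdeg1 L (Or.inr hfβ)) hxnw hxnL hwL hrw hrL
    have hch2' : List.Chain' (fun p q => ∃ a, c' s(x, q) = some a ∧ Free c' p a) (z :: l₂) := by
      refine chain'_imp_tail (fun p hpm q hqm hRpq => ?_) hch2
      simp only [List.tail_cons] at hqm
      have hql : q ∈ l := by rw [hsp]; simp [hqm]
      exact htrans p q hql (fun h => hzl₂ (h ▸ hqm)) hRpq
    have hRwz' : ∃ a, c' s(x, z) = some a ∧ Free c' w a :=
      ⟨α, flip_beta_eq hαβ hcf ⟨x, by simp, Reachable.refl x⟩,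
        free_flip_alpha hαβ hrw hfwβ⟩
    have hch' : List.Chain' (fun p q => ∃ a, c' s(x, q) = some a ∧ Free c' p a) l := by
      rw [hsp]
      exact List.isChain_append_cons_cons.mpr ⟨hch1', hRwz', hch2'⟩
    have hfL' : Free c' L β := free_flip_of_not_reachable hp hrL hfβ
    exact shift' x l y₀ c' β hlne hlhd hp' hladj hlnd hdom' hch' hfx'β
      (by rw [hLval]; exact hfL')
  · -- Case B1 : shift the fan up to w after flipping
    have hfw' : Free c' w β := free_flip_of_not_reachable hp hrw hfwβ
    have hhd1 : (l₁ ++ [w]).head? = some y₀ := by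
      have h2 : l₁ ++ [w] ++ (z :: l₂) = l := by rw [hsp]; simp
      have h1 : (l₁ ++ [w] ++ (z :: l₂)).head? = (l₁ ++ [w]).head? :=
        List.head?_append_of_ne_nil _ (by simp)
      rw [h2, hlhd] at h1
      exact h1.symm
    have hnd1 : (l₁ ++ [w]).Nodup := by
      have h2 : (l₁ ++ [w] ++ (z :: l₂)).Nodup := by
        rw [List.append_assoc]
        simpa using hlnd'
      exact (List.nodup_append.mp h2).1
    have hadj1 : ∀ u ∈ l₁ ++ [w], G.Adj x u := by
      intro u hu
      apply hladj
      rw [hsp]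
      rcases List.mem_append.mp hu with h | h
      · exact List.mem_append.mpr (Or.inl h)
      · simp at h; subst h; simp
    refine shift' x (l₁ ++ [w]) y₀ c' β (by simp) hhd1 hp' hadj1 hnd1 hdom' hch1' hfx'β ?_
    rw [List.getLast_concat]
    exact hfw'

end ECAux
namespace ECAux
variable {V : Type*} [DecidableEq V]

open scoped Classical in
/-- Push a `Sym2 V` into `Sym2 S` when both endpoints belong to `S`. -/
noncomputable def toSub (S : Set V) : Sym2 V → Option (Sym2 S) :=
  Sym2.lift ⟨fun u v => if h : u ∈ S ∧ v ∈ S then some s(⟨u, h.1⟩, ⟨v, h.2⟩) else none, by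
    intro u v
    dsimp only
    by_cases h : u ∈ S ∧ v ∈ S
    · rw [dif_pos h, dif_pos (and_comm.mp h)]
      exact congrArg some (Sym2.eq_swap)
    · rw [dif_neg h, dif_neg (fun h' => h (and_comm.mp h'))]⟩

lemma toSub_map {S : Set V} {e : Sym2 V} {e' : Sym2 S} (h : toSub S e = some e') :
    Sym2.map Subtype.val e' = e := by
  induction e with
  | _ u v =>
    rw [toSub, Sym2.lift_mk] at h
    dsimp only at h
    split_ifs at h with hc
    · simp only [Option.some.injEq] at h
      rw [← h, Sym2.map_pair_eq]

lemma toSub_of_mem {S : Set V} {u v : V} (hu : u ∈ S) (hv : v ∈ S) :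
    toSub S s(u, v) = some s(⟨u, hu⟩, ⟨v, hv⟩) := by
  rw [toSub, Sym2.lift_mk]
  dsimp only
  rw [dif_pos ⟨hu, hv⟩]

lemma mem_of_map_val {S : Set V} {e' : Sym2 S} {v : V} (hv : v ∈ Sym2.map Subtype.val e')
    (h : v ∈ S) : (⟨v, h⟩ : S) ∈ e' := by
  induction e' with
  | _ p q =>
    simp only [Sym2.map_pair_eq, Sym2.mem_iff] at hv
    rcases hv with h1 | h1
    · rw [Sym2.mem_iff]
      left
      exact Subtype.ext h1
    · rw [Sym2.mem_iff]
      right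
      exact Subtype.ext h1

lemma map_val_edge {S : Set V} {G : SimpleGraph V} {e' : Sym2 S}
    (h : e' ∈ (G.induce S).edgeSet) : Sym2.map Subtype.val e' ∈ G.edgeSet := by
  induction e' with
  | _ p q =>
    rw [mem_edgeSet] at h
    simpa using h

/-- If every edge of `G` has both endpoints in `S`, a colouring of `G.induce S`
yields one of `G`. -/
lemma edgeColorable_of_induce_all (G : SimpleGraph V) (S : Set V) (k : ℕ)
    (hall : ∀ e ∈ G.edgeSet, ∀ v ∈ e, v ∈ S) :
    EdgeColorable (G.induce S) k → EdgeColorable G k := by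
  intro h
  rw [edgeColorable_iff_partial] at h ⊢
  obtain ⟨cH, hpH, htH⟩ := h
  refine ⟨fun e => (toSub S e).bind cH, ⟨?_, ?_⟩, ?_⟩
  · -- support
    intro e he
    dsimp only at he
    obtain ⟨e', he', hce'⟩ : ∃ e', toSub S e = some e' ∧ cH e' ≠ none := by
      cases hts : toSub S e with
      | none => rw [hts] at he; simp at he
      | some e' =>
        rw [hts] at he
        exact ⟨e', rfl, by simpa using he⟩
    have := hpH.1 e' hce'
    rw [← toSub_map he']
    induction e' with
    | _ p q =>
      rw [mem_edgeSet] at this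
      exact this
  · -- properness
    intro e f a hef hv hce hcf
    dsimp only at hce hcf
    obtain ⟨e', he', hce'⟩ : ∃ e', toSub S e = some e' ∧ cH e' = some a := by
      cases hts : toSub S e with
      | none => rw [hts] at hce; simp at hce
      | some e' => rw [hts] at hce; exact ⟨e', rfl, by simpa using hce⟩
    obtain ⟨f', hf', hcf'⟩ : ∃ f', toSub S f = some f' ∧ cH f' = some a := by
      cases hts : toSub S f with
      | none => rw [hts] at hcf; simp at hcf
      | some f' => rw [hts] at hcf; exact ⟨f', rfl, by simpa using hcf⟩
    have hef' : e' ≠ f' := by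
      intro h; subst h
      exact hef (by rw [← toSub_map he', ← toSub_map hf'])
    obtain ⟨v, hv1, hv2⟩ := hv
    have heE : e ∈ G.edgeSet :=
      toSub_map he' ▸ map_val_edge (hpH.1 e' (by rw [hce']; simp))
    have hfE : f ∈ G.edgeSet :=
      toSub_map hf' ▸ map_val_edge (hpH.1 f' (by rw [hcf']; simp))
    have hvS : v ∈ S := hall e heE v hv1
    rw [← toSub_map he'] at hv1
    rw [← toSub_map hf'] at hv2
    exact hpH.2 e' f' a hef' ⟨⟨v, hvS⟩, mem_of_map_val hv1 hvS, mem_of_map_val hv2 hvS⟩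
      hce' hcf'
  · -- totality
    intro e he
    induction e with
    | _ u v =>
      have hu : u ∈ S := hall _ he u (by simp)
      have hv : v ∈ S := hall _ he v (by simp)
      show (toSub S s(u, v)).bind cH ≠ none
      rw [toSub_of_mem hu hv]
      have hmem : s((⟨u, hu⟩ : S), (⟨v, hv⟩ : S)) ∈ (G.induce S).edgeSet := by
        rw [mem_edgeSet]
        simpa using he
      have := htH _ hmem
      simpa using this

end ECAux
namespace ECAux
variable {V : Type*} [DecidableEq V]

/-- The semicore vertex set. -/
@[reducible] def SCore [Fintype V] (G : SimpleGraph V) [DecidableRel G.Adj] : Set V :=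
  {v : V | G.degree v = G.maxDegree} ∪
    {v : V | ∃ u, G.degree u = G.maxDegree ∧ G.Adj u v}

lemma degree_le_of_induce_colorable [Fintype V] (G : SimpleGraph V) [DecidableRel G.Adj]
    {S : Set V} {k : ℕ} (h : EdgeColorable (G.induce S) k) {v : V} (hv : v ∈ S)
    (hnb : ∀ z, G.Adj v z → z ∈ S) : G.degree v ≤ k := by
  classical
  obtain ⟨c, hc⟩ := h
  have hmem : ∀ z (hz : z ∈ G.neighborFinset v),
      s((⟨v, hv⟩ : S), (⟨z, hnb z ((mem_neighborFinset _ _ _).mp hz)⟩ : S))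
        ∈ (G.induce S).edgeSet := by
    intro z hz
    rw [mem_edgeSet]
    simpa using (mem_neighborFinset _ _ _).mp hz
  rw [← card_neighborFinset_eq_degree, ← Fintype.card_coe, ← Fintype.card_fin k]
  refine Fintype.card_le_of_injective (fun z => c ⟨_, hmem z.1 z.2⟩) ?_
  rintro ⟨z, hz⟩ ⟨z', hz'⟩ hzz'
  by_contra hne
  have hne' : z ≠ z' := by simpa using hne
  have hvz : v ≠ z := G.ne_of_adj ((mem_neighborFinset _ _ _).mp hz)
  have hvz' : v ≠ z' := G.ne_of_adj ((mem_neighborFinset _ _ _).mp hz')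
  refine hc ⟨_, hmem z hz⟩ ⟨_, hmem z' hz'⟩ ?_
    ⟨⟨v, hv⟩, by simp, by simp⟩ hzz'
  intro hh
  rw [Subtype.mk.injEq, Sym2.eq_iff] at hh
  rcases hh with ⟨-, h2⟩ | ⟨h1, -⟩
  · exact hne' (by simpa [Subtype.ext_iff] using h2)
  · exact hvz' (by simpa [Subtype.ext_iff] using h1)

set_option maxHeartbeats 1000000 in
lemma reverse [Fintype V] (k : ℕ) :
    ∀ (n : ℕ) (G : SimpleGraph V) [inst : DecidableRel G.Adj],
      G.edgeSet.ncard ≤ n →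
      EdgeColorable (G.induce (SCore G)) k → EdgeColorable G k := by
  intro n
  induction n with
  | zero =>
    intro G inst hn hH
    refine edgeColorable_of_induce_all G _ k (fun e he => ?_) hH
    exfalso
    have : 0 < G.edgeSet.ncard := by
      rw [Set.ncard_pos G.edgeSet.toFinite]
      exact ⟨e, he⟩
    omega
  | succ n ih =>
    intro G inst hn hH
    by_cases hseg : ∀ e ∈ G.edgeSet, ∀ v ∈ e, v ∈ SCore G
    · exact edgeColorable_of_induce_all G _ k hseg hH
    push_neg at hseg
    obtain ⟨e, heE, w, hwe, hwS⟩ := hseg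
    obtain ⟨u, rfl⟩ := Sym2.mem_iff_exists.mp hwe
    have hadjwu : G.Adj w u := heE
    have hwu : w ≠ u := G.ne_of_adj hadjwu
    have hwX : ¬ G.degree w = G.maxDegree := fun h => hwS (Or.inl h)
    have huX : ¬ G.degree u = G.maxDegree := fun h => hwS (Or.inr ⟨u, h, hadjwu.symm⟩)
    have : Nonempty V := ⟨w⟩
    obtain ⟨vX, hvX⟩ := G.exists_maximal_degree_vertex
    have hvXw : vX ≠ w := fun h => hwX (by rw [← h, ← hvX])
    have hvXu : vX ≠ u := fun h => huX (by rw [← h, ← hvX])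
    -- maxDegree ≤ k
    have hk : G.maxDegree ≤ k := by
      rw [hvX]
      refine degree_le_of_induce_colorable G hH (Or.inl hvX.symm) ?_
      intro z hz
      exact Or.inr ⟨vX, hvX.symm, hz⟩
    -- the reduced graph
    set G' := G.deleteEdges {s(w, u)} with hG'def
    haveI inst' : DecidableRel G'.Adj := fun a b =>
      decidable_of_iff (G.Adj a b ∧ ¬ s(a, b) ∈ ({s(w, u)} : Set (Sym2 V)))
        (by rw [hG'def, deleteEdges_adj])
    have hE' : G'.edgeSet = G.edgeSet \ {s(w, u)} := by
      rw [hG'def, edgeSet_deleteEdges]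
    have hn' : G'.edgeSet.ncard ≤ n := by
      rw [hE']
      have := Set.ncard_diff_singleton_lt_of_mem heE G.edgeSet.toFinite
      omega
    -- degrees
    have hdeg_le : ∀ v, G'.degree v ≤ G.degree v := by
      intro v
      rw [← card_neighborFinset_eq_degree, ← card_neighborFinset_eq_degree]
      refine Finset.card_le_card ?_
      intro z hz
      rw [mem_neighborFinset] at hz ⊢
      exact hz.1
    have hdeg_other : ∀ v, v ≠ w → v ≠ u → G'.degree v = G.degree v := by
      intro v hvw hvu
      rw [← card_neighborFinset_eq_degree, ← card_neighborFinset_eq_degree]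
      congr 1
      ext z
      rw [mem_neighborFinset, mem_neighborFinset, hG'def, deleteEdges_adj]
      refine ⟨fun h => h.1, fun h => ⟨h, ?_⟩⟩
      intro hc
      rw [Set.mem_singleton_iff, Sym2.eq_iff] at hc
      rcases hc with ⟨h1, -⟩ | ⟨h1, -⟩
      · exact hvw h1
      · exact hvu h1
    have hmax' : G'.maxDegree = G.maxDegree := by
      apply le_antisymm
      · exact maxDegree_le_of_forall_degree_le _ _
          (fun v => (hdeg_le v).trans (G.degree_le_maxDegree v))
      · rw [hvX, ← hdeg_other vX hvXw hvXu]
        exact G'.degree_le_maxDegree vX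
    have hXeq : ∀ z, (G'.degree z = G'.maxDegree ↔ G.degree z = G.maxDegree) := by
      intro z
      rw [hmax']
      by_cases hzw : z = w
      · subst hzw
        refine iff_of_false (fun h => ?_) hwX
        have h1 : G.degree z < G.maxDegree :=
          lt_of_le_of_ne (G.degree_le_maxDegree z) hwX
        have := hdeg_le z
        omega
      · by_cases hzu : z = u
        · subst hzu
          refine iff_of_false (fun h => ?_) huX
          have h1 : G.degree z < G.maxDegree :=
            lt_of_le_of_ne (G.degree_le_maxDegree z) huX
          have := hdeg_le z
          omega
        · rw [hdeg_other z hzw hzu]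
    have hadj_eq : ∀ z v, G.degree z = G.maxDegree → (G'.Adj z v ↔ G.Adj z v) := by
      intro z v hzX
      rw [hG'def, deleteEdges_adj]
      refine ⟨fun h => h.1, fun h => ⟨h, ?_⟩⟩
      intro hc
      rw [Set.mem_singleton_iff, Sym2.eq_iff] at hc
      rcases hc with ⟨h1, -⟩ | ⟨h1, -⟩
      · exact hwX (h1 ▸ hzX)
      · exact huX (h1 ▸ hzX)
    have hSeq : SCore G' = SCore G := by
      ext v
      constructor
      · rintro (h | ⟨z, hz1, hz2⟩)
        · exact Or.inl ((hXeq v).mp h)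
        · exact Or.inr ⟨z, (hXeq z).mp hz1, ((hadj_eq z v ((hXeq z).mp hz1)).mp hz2)⟩
      · rintro (h | ⟨z, hz1, hz2⟩)
        · exact Or.inl ((hXeq v).mpr h)
        · exact Or.inr ⟨z, (hXeq z).mpr hz1, ((hadj_eq z v hz1).mpr hz2)⟩
    -- transfer the colouring of the semicore
    have hH' : EdgeColorable (G'.induce (SCore G')) k := by
      refine edgeColorable_mono _ (G.induce (SCore G)) k
        (fun a => ⟨a.1, hSeq ▸ a.2⟩) ?_ ?_ hH
      · intro a b hab
        rw [Subtype.mk.injEq] at hab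
        exact Subtype.ext hab
      · intro a b hab
        simp only [comap_adj, Function.Embedding.coe_subtype] at hab ⊢
        exact (SimpleGraph.deleteEdges_adj.mp hab).1
    obtain ⟨c, hpc', htc'⟩ := (edgeColorable_iff_partial G' k).mp (ih G' hn' hH')
    have hpcG : Proper G c := by
      refine ⟨fun e he => ?_, hpc'.2⟩
      have := hpc'.1 e he
      rw [hE'] at this
      exact this.1
    have hdomc : ∀ e ∈ G.edgeSet, (c e = none ↔ e = s(w, u)) := by
      intro e he
      constructor
      · intro hnone
        by_contra hne
        refine htc' e ?_ hnone
        rw [hE']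
        exact ⟨he, hne⟩
      · intro h
        cases hc : c e with
        | none => rfl
        | some a =>
          exfalso
          have hsup := hpc'.1 e (by rw [hc]; simp)
          rw [hE'] at hsup
          exact hsup.2 h
    -- extend using the fan lemma at w
    have hdw : G.degree w < k :=
      lt_of_lt_of_le (lt_of_le_of_ne (G.degree_le_maxDegree w) hwX) hk
    have hnbw : ∀ z, G.Adj w z → G.degree z < k := by
      intro z hz
      have hzX : ¬ G.degree z = G.maxDegree := fun h => hwS (Or.inr ⟨z, h, hz.symm⟩)
      exact lt_of_lt_of_le (lt_of_le_of_ne (G.degree_le_maxDegree z) hzX) hk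
    obtain ⟨c'', hp'', ht''⟩ := extend G w u hadjwu hdw hnbw c hpcG hdomc
    exact (edgeColorable_iff_partial G k).mpr ⟨c'', hp'', ht''⟩

end ECAux

/-- G is k-edge colourable iff its semi-core G[X ∪ N(X)] is, where X is the set
of maximum-degree vertices. -/
theorem edgeColorable_iff_semicore {V : Type*} [Fintype V] [DecidableEq V]
    (G : SimpleGraph V) [DecidableRel G.Adj] (k : ℕ) :
    EdgeColorable G k ↔
      EdgeColorable
        (G.induce ({v : V | G.degree v = G.maxDegree} ∪
          {v : V | ∃ u, G.degree u = G.maxDegree ∧ G.Adj u v})) k := by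
  constructor
  · intro h
    exact ECAux.edgeColorable_mono (G.induce _) G k Subtype.val Subtype.val_injective
      (fun a b hab => hab) h
  · intro h
    exact ECAux.reverse k G.edgeSet.ncard G le_rfl h
end
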